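/- arXiv:2204.06796 — 6 statements merged into one kernel-verified Lean document; each statement's English description precedes it below -/
import Mathlib

section
/- For every function f : [0,∞) → ℝ that is twice continuously differentiable and has compact support, there exists a sequence (f_n) of finite linear combinations of the functions x ↦ e^{−λx} with λ ≥ 0 such that f_n → f, f_n′ → f′ and f_n″ → f″ uniformly on [0,∞) as n → ∞. -/
open MeasureTheory Filter Set
open Polynomial

lemma exists_antideriv (q : ℝ[X]) : ∃ Q : ℝ[X], Q.derivative = q ∧ Q.eval 0 = 0 := by
  refine ⟨q.sum fun n a => C (a / (n + 1)) * X ^ (n + 1), ?_, ?_⟩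
  · rw [Polynomial.sum, map_sum]
    conv_rhs => rw [← Polynomial.sum_C_mul_X_pow_eq q, Polynomial.sum]
    refine Finset.sum_congr rfl fun n _ => ?_
    rw [derivative_C_mul_X_pow]
    have h1 : (n : ℝ) + 1 ≠ 0 := by positivity
    have : q.coeff n / (↑n + 1) * ↑(n + 1) = q.coeff n := by push_cast; field_simp
    rw [this, Nat.add_sub_cancel]
  · rw [Polynomial.sum, Polynomial.eval_finset_sum]
    simp

lemma key_approx (g : ℝ → ℝ) (hg : ContDiffOn ℝ 2 g (Icc 0 1)) {ε : ℝ} (hε : 0 < ε) :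
    ∃ P : ℝ[X], ∀ t ∈ Icc (0:ℝ) 1,
      |g t - P.eval t| ≤ ε ∧
      |derivWithin g (Icc 0 1) t - P.derivative.eval t| ≤ ε ∧
      |derivWithin (derivWithin g (Icc 0 1)) (Icc 0 1) t - P.derivative.derivative.eval t| ≤ ε := by
  have hu : UniqueDiffOn ℝ (Icc (0:ℝ) 1) := uniqueDiffOn_Icc (by norm_num)
  set g₁ := derivWithin g (Icc (0:ℝ) 1) with hg₁def
  set g₂ := derivWithin g₁ (Icc (0:ℝ) 1) with hg₂def
  have hg₁ : ContDiffOn ℝ 1 g₁ (Icc 0 1) := hg.derivWithin hu (by norm_num)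
  have hg₁cont : ContinuousOn g₁ (Icc 0 1) := hg₁.continuousOn
  have hg₂cont : ContinuousOn g₂ (Icc 0 1) := hg₁.continuousOn_derivWithin hu (by norm_num)
  obtain ⟨q, hq⟩ := exists_polynomial_near_of_continuousOn 0 1 g₂ hg₂cont ε hε
  obtain ⟨Q1', hQ1d, hQ10⟩ := exists_antideriv q
  set Q₁ : ℝ[X] := C (g₁ 0) + Q1' with hQ₁def
  obtain ⟨Q0', hQ0d, hQ00⟩ := exists_antideriv Q₁
  set P : ℝ[X] := C (g 0) + Q0' with hPdef
  have hPd : P.derivative = Q₁ := by rw [hPdef, derivative_add, derivative_C, zero_add, hQ0d]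
  have hPdd : P.derivative.derivative = q := by
    rw [hPd, hQ₁def, derivative_add, derivative_C, zero_add, hQ1d]
  -- FTC for g and g₁
  have hderiv_at : ∀ h h' : ℝ → ℝ, (∀ u ∈ Icc (0:ℝ) 1, HasDerivWithinAt h (h' u) (Icc 0 1) u) →
      ∀ t ∈ Icc (0:ℝ) 1, ∀ x ∈ Ioo (0:ℝ) t, HasDerivWithinAt h (h' x) (Ioi x) x := by
    intro h h' hh t ht x hx
    have hx1 : x ∈ Icc (0:ℝ) 1 := ⟨hx.1.le, (hx.2.trans_le ht.2).le⟩
    have : HasDerivAt h (h' x) x :=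
      (hh x hx1).hasDerivAt (Icc_mem_nhds hx.1 (hx.2.trans_le ht.2))
    exact this.hasDerivWithinAt
  have hg₁deriv : ∀ u ∈ Icc (0:ℝ) 1, HasDerivWithinAt g₁ (g₂ u) (Icc 0 1) u := fun u hu' =>
    (hg₁.differentiableOn (by norm_num) u hu').hasDerivWithinAt
  have hgderiv : ∀ u ∈ Icc (0:ℝ) 1, HasDerivWithinAt g (g₁ u) (Icc 0 1) u := fun u hu' =>
    (hg.differentiableOn (by norm_num) u hu').hasDerivWithinAt
  have ftc1 : ∀ t ∈ Icc (0:ℝ) 1, ∫ u in (0:ℝ)..t, g₂ u = g₁ t - g₁ 0 := by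
    intro t ht
    refine intervalIntegral.integral_eq_sub_of_hasDeriv_right_of_le ht.1
      (hg₁cont.mono (Icc_subset_Icc le_rfl ht.2)) (hderiv_at g₁ g₂ hg₁deriv t ht) ?_
    exact (hg₂cont.mono (by rw [uIcc_of_le ht.1]; exact Icc_subset_Icc le_rfl ht.2)).intervalIntegrable
  have ftc0 : ∀ t ∈ Icc (0:ℝ) 1, ∫ u in (0:ℝ)..t, g₁ u = g t - g 0 := by
    intro t ht
    refine intervalIntegral.integral_eq_sub_of_hasDeriv_right_of_le ht.1
      (hg.continuousOn.mono (Icc_subset_Icc le_rfl ht.2)) (hderiv_at g g₁ hgderiv t ht) ?_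
    exact (hg₁cont.mono (by rw [uIcc_of_le ht.1]; exact Icc_subset_Icc le_rfl ht.2)).intervalIntegrable
  -- FTC for polynomials
  have pftc : ∀ (R : ℝ[X]) (t : ℝ), ∫ u in (0:ℝ)..t, R.derivative.eval u = R.eval t - R.eval 0 := by
    intro R t
    exact intervalIntegral.integral_eq_sub_of_hasDerivAt (fun x _ => R.hasDerivAt x)
      (R.derivative.continuous.continuousOn.intervalIntegrable)
  refine ⟨P, fun t ht => ?_⟩
  have hsub : uIoc (0:ℝ) t ⊆ Icc 0 1 := by
    rw [uIoc_of_le ht.1]; exact (Ioc_subset_Icc_self).trans (Icc_subset_Icc le_rfl ht.2)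
  -- second derivative bound
  have b2 : ∀ u ∈ Icc (0:ℝ) 1, |g₂ u - P.derivative.derivative.eval u| ≤ ε := by
    intro u hu'
    rw [hPdd, abs_sub_comm]
    exact (hq u hu').le
  -- first derivative bound
  have e1 : ∀ u ∈ Icc (0:ℝ) 1, g₁ u - P.derivative.eval u = ∫ v in (0:ℝ)..u, (g₂ v - q.eval v) := by
    intro u hu'
    have hint : IntervalIntegrable g₂ volume 0 u :=
      (hg₂cont.mono (by rw [uIcc_of_le hu'.1]; exact Icc_subset_Icc le_rfl hu'.2)).intervalIntegrable
    have h1 := ftc1 u hu'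
    have h2 := pftc Q1' u
    rw [hQ1d] at h2
    rw [intervalIntegral.integral_sub hint q.continuous.continuousOn.intervalIntegrable,
      h1, h2, hQ10, hPd, hQ₁def]
    simp
    ring
  have b1 : ∀ u ∈ Icc (0:ℝ) 1, |g₁ u - P.derivative.eval u| ≤ ε := by
    intro u hu'
    rw [e1 u hu']
    have hsub' : uIoc (0:ℝ) u ⊆ Icc 0 1 := by
      rw [uIoc_of_le hu'.1]; exact (Ioc_subset_Icc_self).trans (Icc_subset_Icc le_rfl hu'.2)
    have := intervalIntegral.norm_integral_le_of_norm_le_const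
      (C := ε) (f := fun v => g₂ v - q.eval v) (a := 0) (b := u) ?_
    · rw [Real.norm_eq_abs] at this
      refine this.trans ?_
      have : |u - 0| ≤ 1 := by rw [sub_zero, abs_of_nonneg hu'.1]; exact hu'.2
      nlinarith
    · intro v hv
      rw [Real.norm_eq_abs]
      have := b2 v (hsub' hv)
      rwa [hPdd] at this
  -- zeroth bound
  have e0 : g t - P.eval t = ∫ v in (0:ℝ)..t, (g₁ v - Q₁.eval v) := by
    have hint : IntervalIntegrable g₁ volume 0 t :=
      (hg₁cont.mono (by rw [uIcc_of_le ht.1]; exact Icc_subset_Icc le_rfl ht.2)).intervalIntegrable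
    have h1 := ftc0 t ht
    have h2 := pftc Q0' t
    rw [hQ0d] at h2
    rw [intervalIntegral.integral_sub hint Q₁.continuous.continuousOn.intervalIntegrable,
      h1, h2, hQ00, hPdef]
    simp
    ring
  have b0 : |g t - P.eval t| ≤ ε := by
    rw [e0]
    have := intervalIntegral.norm_integral_le_of_norm_le_const
      (C := ε) (f := fun v => g₁ v - Q₁.eval v) (a := 0) (b := t) ?_
    · rw [Real.norm_eq_abs] at this
      refine this.trans ?_
      have : |t - 0| ≤ 1 := by rw [sub_zero, abs_of_nonneg ht.1]; exact ht.2
      nlinarith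
    · intro v hv
      rw [Real.norm_eq_abs]
      have := b1 v (hsub hv)
      rwa [hPd] at this
  exact ⟨b0, b1 t ht, b2 t ht⟩

lemma hasDerivAt_term (c a x : ℝ) :
    HasDerivAt (fun x => a * Real.exp (c * x)) (a * c * Real.exp (c * x)) x := by
  have h := ((Real.hasDerivAt_exp (c * x)).comp x ((hasDerivAt_id x).const_mul c)).const_mul a
  exact h.congr_deriv (by ring)

lemma hasDerivAt_expneg (x : ℝ) :
    HasDerivAt (fun y => Real.exp (-y)) (-Real.exp (-x)) x := by
  have h := (Real.hasDerivAt_exp (-x)).comp x (hasDerivAt_neg x)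
  exact h.congr_deriv (by ring)

lemma sum_eval (P : ℝ[X]) (x : ℝ) :
    ∑ i ∈ Finset.range (P.natDegree + 1), P.coeff i * Real.exp (-(i : ℝ) * x)
      = P.eval (Real.exp (-x)) := by
  rw [Polynomial.eval_eq_sum_range]
  refine Finset.sum_congr rfl fun i _ => ?_
  rw [← Real.exp_nat_mul]
  congr 1
  ring_nf

lemma sum1_eval (P : ℝ[X]) (x : ℝ) :
    ∑ i ∈ Finset.range (P.natDegree + 1), P.coeff i * (-(i : ℝ)) * Real.exp (-(i : ℝ) * x)
      = -(Real.exp (-x)) * P.derivative.eval (Real.exp (-x)) := by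
  have hA : HasDerivAt
      (fun y => ∑ i ∈ Finset.range (P.natDegree + 1), P.coeff i * Real.exp (-(i : ℝ) * y))
      (∑ i ∈ Finset.range (P.natDegree + 1), P.coeff i * (-(i : ℝ)) * Real.exp (-(i : ℝ) * x))
      x := by
    apply HasDerivAt.fun_sum
    intro i _
    exact hasDerivAt_term (-(i : ℝ)) (P.coeff i) x
  have hB : HasDerivAt (fun y => P.eval (Real.exp (-y)))
      (P.derivative.eval (Real.exp (-x)) * (-Real.exp (-x))) x :=
    (P.hasDerivAt (Real.exp (-x))).comp x (hasDerivAt_expneg x) (h₂ := fun y => P.eval y)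
  have hfun : (fun y => ∑ i ∈ Finset.range (P.natDegree + 1),
      P.coeff i * Real.exp (-(i : ℝ) * y)) = fun y => P.eval (Real.exp (-y)) :=
    funext fun y => sum_eval P y
  rw [hfun] at hA
  rw [hA.unique hB]
  ring

lemma sum2_eval (P : ℝ[X]) (x : ℝ) :
    ∑ i ∈ Finset.range (P.natDegree + 1), P.coeff i * (i : ℝ) ^ 2 * Real.exp (-(i : ℝ) * x)
      = Real.exp (-x) * P.derivative.eval (Real.exp (-x))
        + (Real.exp (-x)) ^ 2 * P.derivative.derivative.eval (Real.exp (-x)) := by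
  have hA : HasDerivAt
      (fun y => ∑ i ∈ Finset.range (P.natDegree + 1),
        P.coeff i * (-(i : ℝ)) * Real.exp (-(i : ℝ) * y))
      (∑ i ∈ Finset.range (P.natDegree + 1),
        P.coeff i * (i : ℝ) ^ 2 * Real.exp (-(i : ℝ) * x)) x := by
    apply HasDerivAt.fun_sum
    intro i _
    have h := hasDerivAt_term (-(i : ℝ)) (P.coeff i * (-(i : ℝ))) x
    exact h.congr_deriv (by ring)
  have hb : HasDerivAt (fun y => P.derivative.eval (Real.exp (-y)))
      (P.derivative.derivative.eval (Real.exp (-x)) * (-Real.exp (-x))) x :=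
    (P.derivative.hasDerivAt (Real.exp (-x))).comp x (hasDerivAt_expneg x) (h₂ := fun y => P.derivative.eval y)
  have ha : HasDerivAt (fun y => -(Real.exp (-y))) (-(-Real.exp (-x))) x :=
    (hasDerivAt_expneg x).neg
  have hB := ha.mul hb
  have hfun : (fun y => ∑ i ∈ Finset.range (P.natDegree + 1),
      P.coeff i * (-(i : ℝ)) * Real.exp (-(i : ℝ) * y))
      = fun y => -(Real.exp (-y)) * P.derivative.eval (Real.exp (-y)) :=
    funext fun y => sum1_eval P y
  rw [hfun] at hA
  rw [hA.unique hB]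
  ring

/-- every `f ∈ C_c²([0,∞))` can be approximated, together with its first and
second (one-sided) derivatives, uniformly on `[0,∞)` by finite linear combinations of the
exponentials `x ↦ e^{−λx}`, `λ ≥ 0`. -/
theorem stmt2 (f : ℝ → ℝ)
    (hf : ContDiffOn ℝ 2 f (Ici 0))
    (hsupp : ∃ M : ℝ, ∀ x, M ≤ x → f x = 0) :
    ∃ (N : ℕ → ℕ) (coef lam : ℕ → ℕ → ℝ),
      (∀ n i, 0 ≤ lam n i) ∧
      TendstoUniformlyOn
        (fun n x => ∑ i ∈ Finset.range (N n), coef n i * Real.exp (-(lam n i) * x))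
        f atTop (Ici 0) ∧
      TendstoUniformlyOn
        (fun n x => ∑ i ∈ Finset.range (N n),
          coef n i * (-(lam n i)) * Real.exp (-(lam n i) * x))
        (fun x => derivWithin f (Ici 0) x) atTop (Ici 0) ∧
      TendstoUniformlyOn
        (fun n x => ∑ i ∈ Finset.range (N n),
          coef n i * (lam n i) ^ 2 * Real.exp (-(lam n i) * x))
        (fun x => derivWithin (fun y => derivWithin f (Ici 0) y) (Ici 0) x)
        atTop (Ici 0) := by
  obtain ⟨M, hM⟩ := hsupp
  set g : ℝ → ℝ := fun t => if 0 < t then f (-Real.log t) else 0 with hgdef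
  -- g vanishes near 0
  have hg0 : ∀ t ∈ Iio (Real.exp (-M)), g t = 0 := by
    intro t ht
    by_cases h : 0 < t
    · simp only [hgdef, if_pos h]
      apply hM
      have : Real.log t < -M := by
        calc Real.log t < Real.log (Real.exp (-M)) := Real.log_lt_log h ht
        _ = -M := Real.log_exp _
      linarith
    · simp [hgdef, h]
  -- g ∘ exp(-·) = f on Ici 0
  have hgf : ∀ x ∈ Ici (0:ℝ), g (Real.exp (-x)) = f x := by
    intro x hx
    simp only [hgdef, if_pos (Real.exp_pos _), Real.log_exp, neg_neg]
  -- g is C² on [0,1]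
  have hmapslog : MapsTo (fun t => -Real.log t) (Ioc (0:ℝ) 1) (Ici (0:ℝ)) := by
    intro t ht
    simp only [mem_Ici]
    have := Real.log_nonpos ht.1.le ht.2
    linarith
  have hIoc : ContDiffOn ℝ 2 g (Ioc 0 1) := by
    have h1 : ContDiffOn ℝ 2 (fun t => f (-Real.log t)) (Ioc 0 1) := by
      refine hf.comp ?_ hmapslog
      exact ((Real.contDiffOn_log.of_le le_top).mono
        (fun t ht => by simp only [mem_compl_iff, mem_singleton_iff]; exact ne_of_gt ht.1)).neg
    refine h1.congr fun u hu => ?_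
    simp [hgdef, hu.1]
  have hgc : ContDiffOn ℝ 2 g (Icc 0 1) := by
    intro t ht
    rcases eq_or_lt_of_le ht.1 with h0 | h0
    · -- t = 0
      subst h0
      have hmem : Iio (Real.exp (-M)) ∈ nhdsWithin (0:ℝ) (Icc 0 1) :=
        nhdsWithin_le_nhds (Iio_mem_nhds (Real.exp_pos _))
      have hev : g =ᶠ[nhdsWithin (0:ℝ) (Icc 0 1)] (fun _ => (0:ℝ)) := by
        filter_upwards [hmem] with u hu using hg0 u hu
      exact (contDiffWithinAt_const (c := (0:ℝ))).congr_of_eventuallyEq hev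
        (hg0 0 (by simp [Real.exp_pos]))
    · -- t > 0
      have h := hIoc t ⟨h0, ht.2⟩
      have heq : Ioc (0:ℝ) 1 = Icc 0 1 ∩ Ioi 0 := by
        ext u
        simp only [mem_Ioc, mem_inter_iff, mem_Icc, mem_Ioi]
        constructor
        · rintro ⟨h1, h2⟩; exact ⟨⟨h1.le, h2⟩, h1⟩
        · rintro ⟨⟨_, h2⟩, h3⟩; exact ⟨h3, h2⟩
      rw [heq] at h
      exact (contDiffWithinAt_inter (Ioi_mem_nhds h0)).mp h
  -- derivatives of g
  have hu01 : UniqueDiffOn ℝ (Icc (0:ℝ) 1) := uniqueDiffOn_Icc (by norm_num)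
  set g₁ := derivWithin g (Icc (0:ℝ) 1) with hg₁def
  set g₂ := derivWithin g₁ (Icc (0:ℝ) 1) with hg₂def
  have hg₁c : ContDiffOn ℝ 1 g₁ (Icc 0 1) := hgc.derivWithin hu01 (by norm_num)
  have hg₁d : ∀ u ∈ Icc (0:ℝ) 1, HasDerivWithinAt g (g₁ u) (Icc 0 1) u := fun u hu =>
    (hgc.differentiableOn (by norm_num) u hu).hasDerivWithinAt
  have hg₂d : ∀ u ∈ Icc (0:ℝ) 1, HasDerivWithinAt g₁ (g₂ u) (Icc 0 1) u := fun u hu =>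
    (hg₁c.differentiableOn (by norm_num) u hu).hasDerivWithinAt
  -- exp(-·) maps Ici 0 into Icc 0 1
  have hmaps : MapsTo (fun x => Real.exp (-x)) (Ici (0:ℝ)) (Icc (0:ℝ) 1) := by
    intro x hx
    exact ⟨(Real.exp_pos _).le, Real.exp_le_one_iff.mpr (by simpa using hx)⟩
  have hexpW : ∀ x : ℝ, HasDerivWithinAt (fun y => Real.exp (-y)) (-Real.exp (-x)) (Ici 0) x :=
    fun x => (hasDerivAt_expneg x).hasDerivWithinAt
  -- first derivative of f
  have hfd1 : ∀ x ∈ Ici (0:ℝ), HasDerivWithinAt f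
      (g₁ (Real.exp (-x)) * (-Real.exp (-x))) (Ici 0) x := by
    intro x hx
    have h := (hg₁d _ (hmaps hx)).comp x (hexpW x) hmaps
    exact h.congr (fun y hy => (hgf y hy).symm) (hgf x hx).symm
  have hder1 : ∀ x ∈ Ici (0:ℝ), derivWithin f (Ici 0) x
      = -(Real.exp (-x)) * g₁ (Real.exp (-x)) := by
    intro x hx
    rw [(hfd1 x hx).derivWithin (uniqueDiffOn_Ici 0 x hx)]
    ring
  -- second derivative of f
  set φ : ℝ → ℝ := fun x => -(Real.exp (-x)) * g₁ (Real.exp (-x)) with hφdef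
  have hfd2 : ∀ x ∈ Ici (0:ℝ), HasDerivWithinAt φ
      (-(-Real.exp (-x)) * g₁ (Real.exp (-x))
        + -(Real.exp (-x)) * (g₂ (Real.exp (-x)) * (-Real.exp (-x)))) (Ici 0) x := by
    intro x hx
    have hb : HasDerivWithinAt (fun y => g₁ (Real.exp (-y)))
        (g₂ (Real.exp (-x)) * (-Real.exp (-x))) (Ici 0) x :=
      (hg₂d _ (hmaps hx)).comp x (hexpW x) hmaps (h₂ := g₁)
    have ha : HasDerivWithinAt (fun y => -(Real.exp (-y))) (-(-Real.exp (-x))) (Ici 0) x :=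
      (hexpW x).neg
    exact ha.mul hb
  have hder2 : ∀ x ∈ Ici (0:ℝ), derivWithin (fun y => derivWithin f (Ici 0) y) (Ici 0) x
      = Real.exp (-x) * g₁ (Real.exp (-x)) + (Real.exp (-x)) ^ 2 * g₂ (Real.exp (-x)) := by
    intro x hx
    have h1 : derivWithin (fun y => derivWithin f (Ici 0) y) (Ici 0) x = derivWithin φ (Ici 0) x :=
      derivWithin_congr (fun y hy => hder1 y hy) (hder1 x hx)
    rw [h1, (hfd2 x hx).derivWithin (uniqueDiffOn_Ici 0 x hx)]
    ring
  -- choose polynomials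
  have hpos : ∀ n : ℕ, (0:ℝ) < 1 / (n + 1) := fun n => by positivity
  choose P hP using fun n : ℕ => key_approx g hgc (hpos n)
  refine ⟨fun n => (P n).natDegree + 1, fun n i => (P n).coeff i, fun n i => (i : ℝ),
    fun n i => Nat.cast_nonneg i, ?_, ?_, ?_⟩
  · -- zeroth order
    rw [Metric.tendstoUniformlyOn_iff]
    intro ε hε
    have htend : Tendsto (fun n : ℕ => (1:ℝ) / (n + 1)) atTop (nhds 0) :=
      tendsto_one_div_add_atTop_nhds_zero_nat
    filter_upwards [htend.eventually (eventually_lt_nhds hε)] with n hn x hx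
    have ht : Real.exp (-x) ∈ Icc (0:ℝ) 1 := hmaps hx
    have hb := (hP n (Real.exp (-x)) ht).1
    rw [Real.dist_eq, ← hgf x hx, sum_eval]
    calc |g (Real.exp (-x)) - (P n).eval (Real.exp (-x))| ≤ 1 / (n + 1) := hb
    _ < ε := hn
  · -- first order
    rw [Metric.tendstoUniformlyOn_iff]
    intro ε hε
    have htend : Tendsto (fun n : ℕ => (1:ℝ) / (n + 1)) atTop (nhds 0) :=
      tendsto_one_div_add_atTop_nhds_zero_nat
    filter_upwards [htend.eventually (eventually_lt_nhds hε)] with n hn x hx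
    set t := Real.exp (-x) with htdef
    have ht : t ∈ Icc (0:ℝ) 1 := hmaps hx
    have hb := (hP n t ht).2.1
    rw [Real.dist_eq, hder1 x hx, sum1_eval]
    have : -t * g₁ t - -t * (P n).derivative.eval t = -t * (g₁ t - (P n).derivative.eval t) := by
      ring
    rw [this, abs_mul, abs_neg, abs_of_nonneg ht.1]
    calc t * |g₁ t - (P n).derivative.eval t| ≤ 1 * (1 / (n + 1)) :=
      mul_le_mul ht.2 hb (abs_nonneg _) zero_le_one
    _ = 1 / (n + 1) := one_mul _
    _ < ε := hn
  · -- second order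
    rw [Metric.tendstoUniformlyOn_iff]
    intro ε hε
    have htend : Tendsto (fun n : ℕ => (2:ℝ) / (n + 1)) atTop (nhds 0) := by
      have : Tendsto (fun n : ℕ => (1:ℝ) / (n + 1)) atTop (nhds 0) :=
        tendsto_one_div_add_atTop_nhds_zero_nat
      have h2 := this.const_mul (2:ℝ)
      simpa [mul_one_div, div_eq_mul_inv] using h2
    filter_upwards [htend.eventually (eventually_lt_nhds hε)] with n hn x hx
    set t := Real.exp (-x) with htdef
    have ht : t ∈ Icc (0:ℝ) 1 := hmaps hx
    have hb1 := (hP n t ht).2.1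
    have hb2 := (hP n t ht).2.2
    rw [Real.dist_eq, hder2 x hx, sum2_eval]
    have heq : t * g₁ t + t ^ 2 * g₂ t
        - (t * (P n).derivative.eval t + t ^ 2 * (P n).derivative.derivative.eval t)
        = t * (g₁ t - (P n).derivative.eval t)
          + t ^ 2 * (g₂ t - (P n).derivative.derivative.eval t) := by
      ring
    rw [heq]
    have h1 : |t * (g₁ t - (P n).derivative.eval t)| ≤ 1 / (n + 1) := by
      rw [abs_mul, abs_of_nonneg ht.1]
      calc t * |g₁ t - (P n).derivative.eval t| ≤ 1 * (1 / (n + 1)) :=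
        mul_le_mul ht.2 hb1 (abs_nonneg _) zero_le_one
      _ = 1 / (n + 1) := one_mul _
    have h2 : |t ^ 2 * (g₂ t - (P n).derivative.derivative.eval t)| ≤ 1 / (n + 1) := by
      rw [abs_mul, abs_of_nonneg (by positivity : (0:ℝ) ≤ t ^ 2)]
      have ht2 : t ^ 2 ≤ 1 := by nlinarith [ht.1, ht.2]
      calc t ^ 2 * |g₂ t - (P n).derivative.derivative.eval t| ≤ 1 * (1 / (n + 1)) :=
        mul_le_mul ht2 hb2 (abs_nonneg _) zero_le_one
      _ = 1 / (n + 1) := one_mul _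
    calc |t * (g₁ t - (P n).derivative.eval t)
        + t ^ 2 * (g₂ t - (P n).derivative.derivative.eval t)|
        ≤ |t * (g₁ t - (P n).derivative.eval t)|
          + |t ^ 2 * (g₂ t - (P n).derivative.derivative.eval t)| := abs_add_le _ _
    _ ≤ 1 / (n + 1) + 1 / (n + 1) := add_le_add h1 h2
    _ = 2 / (n + 1) := by ring
    _ < ε := hn
end

section
/- Let f : [0,∞) → ℝ be twice continuously differentiable with compact support, and let p : [0,1] → ℝ be defined by p(x) = f(−log x) for x ∈ (0,1] and p(0) = 0. For n ≥ 1 define f_n(x) = Σ_{r=1}^n C(n,r) f(−log(r/n)) e^{−rx}(1 − e^{−x})^{n−r} for x ≥ 0, where C(n,r) is the binomial coefficient. Then f_n(x) = B_n(p, e^{−x}) for all x ≥ 0, where B_n(p,y) = Σ_{r=0}^n p(r/n) C(n,r) y^r (1−y)^{n−r} is the n-th Bernstein polynomial of p, and moreover f_n → f and f_n′ → f′ uniformly on [0,∞) as n → ∞. -/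
open MeasureTheory Filter Set

/-- The `n`-th Bernstein polynomial of a function `p` on `[0,1]`. -/
noncomputable def bernsteinPoly (p : ℝ → ℝ) (n : ℕ) (y : ℝ) : ℝ :=
  ∑ r ∈ Finset.range (n + 1),
    p ((r : ℝ) / n) * (n.choose r : ℝ) * y ^ r * (1 - y) ^ (n - r)

/-- The approximating sequence `f_n(x) = Σ_{r=1}^n C(n,r) f(−log(r/n)) e^{−rx}(1−e^{−x})^{n−r}`. -/
noncomputable def fseq (f : ℝ → ℝ) (n : ℕ) (x : ℝ) : ℝ :=
  ∑ r ∈ Finset.Icc 1 n,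
    (n.choose r : ℝ) * f (-Real.log ((r : ℝ) / n)) *
      Real.exp (-(r : ℝ) * x) * (1 - Real.exp (-x)) ^ (n - r)


lemma mysum (m : ℕ) (y : ℝ) :
    ∑ k ∈ Finset.range (m+1), (m.choose k : ℝ) * y ^ k * (1-y) ^ (m-k) = 1 := by
  have h := add_pow y (1-y) m
  simp only [add_sub_cancel, one_pow] at h
  calc ∑ k ∈ Finset.range (m+1), (m.choose k : ℝ) * y ^ k * (1-y) ^ (m-k)
      = ∑ k ∈ Finset.range (m+1), y ^ k * (1-y) ^ (m-k) * (m.choose k : ℝ) :=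
        Finset.sum_congr rfl fun k _ => by ring
    _ = 1 := h.symm

lemma myvariance (m : ℕ) (hm : 1 ≤ m) (y : ℝ) :
    ∑ k ∈ Finset.range (m+1), ((k:ℝ)/m - y)^2 * ((m.choose k : ℝ) * y ^ k * (1-y) ^ (m-k))
      = y * (1-y) / m := by
  have hm' : (0:ℝ) < m := by exact_mod_cast hm
  have h := bernsteinPolynomial.variance ℝ m
  apply_fun Polynomial.eval y at h
  simp only [Polynomial.eval_finset_sum, Polynomial.eval_mul, Polynomial.eval_pow,
    Polynomial.eval_sub, Polynomial.eval_natCast, Polynomial.eval_smul, nsmul_eq_mul,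
    Polynomial.eval_X, Polynomial.eval_one, bernsteinPolynomial, Polynomial.eval_ofNat] at h
  have key : ∀ k : ℕ, ((k:ℝ)/m - y)^2 = ((m:ℝ)*y - k)^2 / (m:ℝ)^2 := by
    intro k; field_simp; ring
  calc ∑ k ∈ Finset.range (m+1), ((k:ℝ)/m - y)^2 * ((m.choose k : ℝ) * y ^ k * (1-y) ^ (m-k))
      = (∑ k ∈ Finset.range (m+1), ((m:ℝ)*y - k)^2 * ((m.choose k : ℝ) * y ^ k * (1-y) ^ (m-k))) / (m:ℝ)^2 := by
        rw [Finset.sum_div]; exact Finset.sum_congr rfl fun k _ => by rw [key]; ring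
    _ = y * (1-y) / m := by rw [h]; field_simp

lemma core_approx (g : ℝ → ℝ) (hg : ContinuousOn g (Icc 0 1)) :
    ∀ ε > (0:ℝ), ∃ N : ℕ, 1 ≤ N ∧ ∀ m, N ≤ m → ∀ ξ : ℕ → ℝ,
      (∀ k ≤ m, ξ k ∈ Icc (0:ℝ) 1) → (∀ k ≤ m, |ξ k - k / m| ≤ 2 / m) →
      ∀ y ∈ Icc (0:ℝ) 1,
        |(∑ k ∈ Finset.range (m + 1),
            g (ξ k) * (m.choose k : ℝ) * y ^ k * (1 - y) ^ (m - k)) - g y| < ε := by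
  intro ε hε
  obtain ⟨C, hC⟩ := isCompact_Icc.exists_bound_of_continuousOn hg
  have hC0 : 0 ≤ C := le_trans (norm_nonneg _) (hC 0 ⟨le_refl _, zero_le_one⟩)
  obtain ⟨δ, hδ, hmod⟩ := Metric.uniformContinuousOn_iff.mp
    (isCompact_Icc.uniformContinuousOn_of_continuous hg) (ε/2) (half_pos hε)
  obtain ⟨N₀, hN₀⟩ := exists_nat_gt (2*C/δ^2 * 9 / (ε/2))
  refine ⟨max N₀ 1, le_max_right _ _, ?_⟩
  intro m hm ξ hξ1 hξ2 y hy
  have hm1 : 1 ≤ m := le_trans (le_max_right _ _) hm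
  have hmR : (0:ℝ) < m := by exact_mod_cast hm1
  have hm1R : (1:ℝ) ≤ m := by exact_mod_cast hm1
  have hmN : (N₀ : ℝ) ≤ m := by exact_mod_cast le_trans (le_max_left _ _) hm
  have hy0 := hy.1; have hy1 := hy.2
  have h1y : (0:ℝ) ≤ 1 - y := by linarith
  set w : ℕ → ℝ := fun k => (m.choose k : ℝ) * y ^ k * (1-y) ^ (m-k) with hw
  have hw0 : ∀ k, 0 ≤ w k := fun k => by positivity
  have hws : ∑ k ∈ Finset.range (m+1), w k = 1 := mysum m y
  have step1 : ∑ k ∈ Finset.range (m+1), (g (ξ k) - g y) * w k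
      = (∑ k ∈ Finset.range (m + 1),
        g (ξ k) * (m.choose k : ℝ) * y ^ k * (1 - y) ^ (m - k)) - g y := by
    calc ∑ k ∈ Finset.range (m+1), (g (ξ k) - g y) * w k
        = ∑ k ∈ Finset.range (m+1), (g (ξ k) * w k - g y * w k) :=
          Finset.sum_congr rfl fun k _ => by ring
      _ = (∑ k ∈ Finset.range (m+1), g (ξ k) * w k)
          - ∑ k ∈ Finset.range (m+1), g y * w k := Finset.sum_sub_distrib _ _
      _ = _ := by
          rw [← Finset.mul_sum, hws, mul_one]
          congr 1
          exact Finset.sum_congr rfl fun k _ => by rw [hw]; ring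
  rw [← step1]
  have hpt : ∀ k ∈ Finset.range (m+1),
      |(g (ξ k) - g y) * w k| ≤ (ε/2 + 2*C/δ^2 * (ξ k - y)^2) * w k := by
    intro k hk
    have hk' : k ≤ m := Nat.lt_succ_iff.mp (Finset.mem_range.mp hk)
    have hξI := hξ1 k hk'
    rw [abs_mul, abs_of_nonneg (hw0 k)]
    apply mul_le_mul_of_nonneg_right _ (hw0 k)
    by_cases hd : dist (ξ k) y < δ
    · have hmm := hmod _ hξI _ hy hd
      have h2 : (0:ℝ) ≤ 2*C/δ^2 * (ξ k - y)^2 := by positivity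
      calc |g (ξ k) - g y| = dist (g (ξ k)) (g y) := (Real.dist_eq _ _).symm
        _ ≤ ε/2 := le_of_lt hmm
        _ ≤ _ := by linarith
    · push_neg at hd
      rw [Real.dist_eq] at hd
      have hsq : δ^2 ≤ (ξ k - y)^2 := by
        rw [← sq_abs (ξ k - y)]
        exact pow_le_pow_left₀ (le_of_lt hδ) hd 2
      have hgb : |g (ξ k) - g y| ≤ 2*C := by
        calc |g (ξ k) - g y| ≤ |g (ξ k)| + |g y| := abs_sub _ _
          _ ≤ C + C := add_le_add (hC _ hξI) (hC _ hy)
          _ = 2*C := by ring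
      calc |g (ξ k) - g y| ≤ 2*C := hgb
        _ = 2*C/δ^2 * δ^2 := by field_simp
        _ ≤ 2*C/δ^2 * (ξ k - y)^2 := by gcongr
        _ ≤ _ := by linarith
  have habs : |∑ k ∈ Finset.range (m+1), (g (ξ k) - g y) * w k|
      ≤ ∑ k ∈ Finset.range (m+1), (ε/2 + 2*C/δ^2 * (ξ k - y)^2) * w k :=
    (Finset.abs_sum_le_sum_abs _ _).trans (Finset.sum_le_sum hpt)
  have hsplit : ∑ k ∈ Finset.range (m+1), (ε/2 + 2*C/δ^2 * (ξ k - y)^2) * w k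
      = ε/2 + 2*C/δ^2 * ∑ k ∈ Finset.range (m+1), (ξ k - y)^2 * w k := by
    calc ∑ k ∈ Finset.range (m+1), (ε/2 + 2*C/δ^2 * (ξ k - y)^2) * w k
        = ∑ k ∈ Finset.range (m+1),
            (ε/2 * w k + 2*C/δ^2 * ((ξ k - y)^2 * w k)) :=
          Finset.sum_congr rfl fun k _ => by ring
      _ = (∑ k ∈ Finset.range (m+1), ε/2 * w k)
          + ∑ k ∈ Finset.range (m+1), 2*C/δ^2 * ((ξ k - y)^2 * w k) :=
          Finset.sum_add_distrib
      _ = _ := by rw [← Finset.mul_sum, ← Finset.mul_sum, hws, mul_one]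
  have hsm : ∑ k ∈ Finset.range (m+1), (ξ k - y)^2 * w k ≤ 9 / m := by
    have hpt2 : ∀ k ∈ Finset.range (m+1),
        (ξ k - y)^2 * w k ≤ (2*((k:ℝ)/m - y)^2 + 8/(m:ℝ)^2) * w k := by
      intro k hk
      have hk' : k ≤ m := Nat.lt_succ_iff.mp (Finset.mem_range.mp hk)
      apply mul_le_mul_of_nonneg_right _ (hw0 k)
      have h2 := hξ2 k hk'
      have habs2 : (ξ k - (k:ℝ)/m)^2 ≤ (2/(m:ℝ))^2 := by
        rw [← sq_abs (ξ k - (k:ℝ)/m)]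
        exact pow_le_pow_left₀ (abs_nonneg _) h2 2
      have key : (ξ k - y)^2 ≤ 2*(ξ k - (k:ℝ)/m)^2 + 2*((k:ℝ)/m - y)^2 := by
        nlinarith [sq_nonneg ((ξ k - (k:ℝ)/m) - ((k:ℝ)/m - y))]
      have h8 : 2*(ξ k - (k:ℝ)/m)^2 ≤ 8/(m:ℝ)^2 := by
        calc 2*(ξ k - (k:ℝ)/m)^2 ≤ 2*(2/(m:ℝ))^2 := by linarith
          _ = 8/(m:ℝ)^2 := by rw [div_pow]; ring
      linarith
    calc ∑ k ∈ Finset.range (m+1), (ξ k - y)^2 * w k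
        ≤ ∑ k ∈ Finset.range (m+1), (2*((k:ℝ)/m - y)^2 + 8/(m:ℝ)^2) * w k :=
          Finset.sum_le_sum hpt2
      _ = 2 * (∑ k ∈ Finset.range (m+1), ((k:ℝ)/m - y)^2 * w k)
          + 8/(m:ℝ)^2 * ∑ k ∈ Finset.range (m+1), w k := by
          rw [Finset.mul_sum, Finset.mul_sum, ← Finset.sum_add_distrib]
          exact Finset.sum_congr rfl fun k _ => by ring
      _ = 2 * (y * (1-y) / m) + 8/(m:ℝ)^2 := by
          rw [myvariance m hm1 y, hws, mul_one]
      _ ≤ 9 / m := by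
          have hy14 : 2 * (y * (1-y)) ≤ 1 := by nlinarith [sq_nonneg (y - 1/2)]
          have h1 : 2 * (y * (1-y) / m) ≤ 1/m := by
            rw [show 2*(y*(1-y)/(m:ℝ)) = (2*(y*(1-y)))/m from by ring]
            gcongr
          have h8 : 8/(m:ℝ)^2 ≤ 8/m := by
            rw [div_le_div_iff₀ (by positivity) hmR]
            nlinarith
          linarith [show (1:ℝ)/m + 8/m = 9/m from by ring]
  have hfin : 2*C/δ^2 * (9/m) < ε/2 := by
    rw [div_lt_iff₀ (half_pos hε)] at hN₀
    rw [show 2*C/δ^2 * (9/(m:ℝ)) = (2*C/δ^2*9)/m from by ring, div_lt_iff₀ hmR]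
    calc 2*C/δ^2*9 < N₀*(ε/2) := hN₀
      _ ≤ m*(ε/2) := mul_le_mul_of_nonneg_right hmN (le_of_lt (half_pos hε))
      _ = ε/2*m := by ring
  calc |∑ k ∈ Finset.range (m+1), (g (ξ k) - g y) * w k|
      ≤ ε/2 + 2*C/δ^2 * ∑ k ∈ Finset.range (m+1), (ξ k - y)^2 * w k :=
        habs.trans_eq hsplit
    _ ≤ ε/2 + 2*C/δ^2 * (9/m) := by
        have := mul_le_mul_of_nonneg_left hsm (by positivity : (0:ℝ) ≤ 2*C/δ^2)
        linarith
    _ < ε := by linarith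

lemma nat_id1 {n k : ℕ} (hn : 1 ≤ n) :
    (k+1) * n.choose (k+1) = n * (n-1).choose k := by
  have hn' : n - 1 + 1 = n := Nat.succ_pred_eq_of_pos hn
  calc (k+1) * n.choose (k+1) = n.choose (k+1) * (k+1) := mul_comm _ _
    _ = (n-1+1).choose (k+1) * (k+1) := by rw [hn']
    _ = (n-1).succ * (n-1).choose k := (Nat.add_one_mul_choose_eq (n-1) k).symm
    _ = n * (n-1).choose k := by rw [Nat.succ_eq_add_one, hn']

lemma nat_id2 {n k : ℕ} (hn : 1 ≤ n) :
    (n - k) * n.choose k = n * (n-1).choose k := by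
  calc (n - k) * n.choose k = n.choose k * (n - k) := mul_comm _ _
    _ = n.choose (k+1) * (k+1) := (Nat.choose_succ_right_eq n k).symm
    _ = (k+1) * n.choose (k+1) := mul_comm _ _
    _ = n * (n-1).choose k := nat_id1 hn

lemma hasDerivAt_bernsteinPoly (P : ℝ → ℝ) (n : ℕ) (hn : 1 ≤ n) (y : ℝ) :
    HasDerivAt (bernsteinPoly P n)
      (∑ k ∈ Finset.range n, (n:ℝ) * (P (((k:ℝ)+1)/n) - P ((k:ℝ)/n)) *
        ((n-1).choose k : ℝ) * y ^ k * (1 - y) ^ (n - 1 - k)) y := by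
  have hterm : ∀ r ∈ Finset.range (n+1), HasDerivAt
      (fun y => P ((r : ℝ) / n) * (n.choose r : ℝ) * y ^ r * (1 - y) ^ (n - r))
      (P ((r : ℝ) / n) * (n.choose r : ℝ) *
        ((r:ℝ) * y ^ (r-1) * (1 - y) ^ (n - r)
          - ((n:ℝ) - r) * y ^ r * (1 - y) ^ (n - r - 1))) y := by
    intro r hr
    have hr' : r ≤ n := Nat.lt_succ_iff.mp (Finset.mem_range.mp hr)
    have h1 : HasDerivAt (fun y : ℝ => y ^ r) ((r:ℝ) * y ^ (r-1)) y := hasDerivAt_pow r y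
    have h2 : HasDerivAt (fun y : ℝ => (1 - y) ^ (n - r))
        (((n - r : ℕ):ℝ) * (1 - y) ^ (n - r - 1) * (-1)) y := by
      have hb : HasDerivAt (fun y : ℝ => 1 - y) (-1) y := by
        simpa using (hasDerivAt_id y).const_sub 1
      exact (hasDerivAt_pow (n - r) (1 - y)).comp y hb
    have h3 := (h1.mul h2).const_mul (P ((r : ℝ) / n) * (n.choose r : ℝ))
    refine (h3.congr_deriv ?_).congr_of_eventuallyEq (Eventually.of_forall fun z => ?_)
    · have : ((n - r : ℕ):ℝ) = (n:ℝ) - r := by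
        push_cast [Nat.cast_sub hr']; ring
      rw [this]; ring
    · simp only [Pi.mul_apply]; ring
  have hsum := HasDerivAt.fun_sum hterm
  have heq : (fun y => ∑ r ∈ Finset.range (n+1),
      P ((r : ℝ) / n) * (n.choose r : ℝ) * y ^ r * (1 - y) ^ (n - r)) = bernsteinPoly P n := by
    funext z; rfl
  rw [heq] at hsum
  refine hsum.congr_deriv ?_
  -- algebra: rearrange the sum
  have expand : ∑ r ∈ Finset.range (n+1), P ((r : ℝ) / n) * (n.choose r : ℝ) *
      ((r:ℝ) * y ^ (r-1) * (1 - y) ^ (n - r)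
        - ((n:ℝ) - r) * y ^ r * (1 - y) ^ (n - r - 1))
      = (∑ r ∈ Finset.range (n+1), P ((r : ℝ) / n) * (n.choose r : ℝ) *
          ((r:ℝ) * y ^ (r-1) * (1 - y) ^ (n - r)))
        - ∑ r ∈ Finset.range (n+1), P ((r : ℝ) / n) * (n.choose r : ℝ) *
          (((n:ℝ) - r) * y ^ r * (1 - y) ^ (n - r - 1)) := by
    rw [← Finset.sum_sub_distrib]
    exact Finset.sum_congr rfl fun r _ => by ring
  have hA : ∑ r ∈ Finset.range (n+1), P ((r : ℝ) / n) * (n.choose r : ℝ) *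
      ((r:ℝ) * y ^ (r-1) * (1 - y) ^ (n - r))
      = ∑ k ∈ Finset.range n, (n:ℝ) * P (((k:ℝ)+1)/n) *
        ((n-1).choose k : ℝ) * y ^ k * (1 - y) ^ (n - 1 - k) := by
    rw [Finset.sum_range_succ']
    simp only [Nat.cast_zero, zero_mul, mul_zero, zero_mul, add_zero]
    refine Finset.sum_congr rfl fun k hk => ?_
    have hk' : k < n := Finset.mem_range.mp hk
    have hid : ((k:ℝ)+1) * (n.choose (k+1) : ℝ) = (n:ℝ) * ((n-1).choose k : ℝ) := by
      exact_mod_cast congrArg (Nat.cast : ℕ → ℝ) (nat_id1 (k := k) hn)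
    have he1 : k + 1 - 1 = k := rfl
    have he2 : n - (k+1) = n - 1 - k := by omega
    push_cast
    rw [he2]
    calc P (((k:ℝ)+1)/n) * (n.choose (k+1) : ℝ) * (((k:ℝ)+1) * y ^ k * (1-y) ^ (n-1-k))
        = (((k:ℝ)+1) * (n.choose (k+1) : ℝ)) * P (((k:ℝ)+1)/n) * y ^ k * (1-y) ^ (n-1-k) := by
          ring
      _ = _ := by rw [hid]; ring
  have hB : ∑ r ∈ Finset.range (n+1), P ((r : ℝ) / n) * (n.choose r : ℝ) *
      (((n:ℝ) - r) * y ^ r * (1 - y) ^ (n - r - 1))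
      = ∑ k ∈ Finset.range n, (n:ℝ) * P ((k:ℝ)/n) *
        ((n-1).choose k : ℝ) * y ^ k * (1 - y) ^ (n - 1 - k) := by
    rw [Finset.sum_range_succ]
    simp only [sub_self, zero_mul, mul_zero, add_zero]
    refine Finset.sum_congr rfl fun k hk => ?_
    have hk' : k < n := Finset.mem_range.mp hk
    have hid : ((n:ℝ) - k) * (n.choose k : ℝ) = (n:ℝ) * ((n-1).choose k : ℝ) := by
      have := congrArg (Nat.cast : ℕ → ℝ) (nat_id2 (k := k) hn)
      push_cast [Nat.cast_sub (le_of_lt hk')] at this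
      linarith [this]
    have he2 : n - k - 1 = n - 1 - k := by omega
    rw [he2]
    calc P ((k:ℝ)/n) * (n.choose k : ℝ) * (((n:ℝ) - k) * y ^ k * (1-y) ^ (n-1-k))
        = (((n:ℝ) - k) * (n.choose k : ℝ)) * P ((k:ℝ)/n) * y ^ k * (1-y) ^ (n-1-k) := by
          ring
      _ = _ := by rw [hid]; ring
  rw [expand, hA, hB, ← Finset.sum_sub_distrib]
  exact Finset.sum_congr rfl fun k _ => by ring


noncomputable def Pfun (f : ℝ → ℝ) : ℝ → ℝ :=
  fun y => if y ≤ 0 then 0 else f (-Real.log y)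

noncomputable def gfun (f : ℝ → ℝ) : ℝ → ℝ :=
  fun y => if y ≤ 0 then 0 else -(derivWithin f (Ici 0) (-Real.log y)) / y

lemma Pfun_pos {f : ℝ → ℝ} {y : ℝ} (hy : 0 < y) : Pfun f y = f (-Real.log y) := by
  simp [Pfun, not_le.mpr hy]

lemma gfun_pos {f : ℝ → ℝ} {y : ℝ} (hy : 0 < y) :
    gfun f y = -(derivWithin f (Ici 0) (-Real.log y)) / y := by
  simp [gfun, not_le.mpr hy]

section PG
variable {f : ℝ → ℝ} {M : ℝ}

lemma neglog_mem {y : ℝ} (hy0 : 0 < y) (hy1 : y ≤ 1) : -Real.log y ∈ Ici (0:ℝ) := by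
  have := Real.log_nonpos (le_of_lt hy0) hy1
  simp only [mem_Ici]; linarith

lemma neglog_gt {y : ℝ} (hy0 : 0 < y) (hyM : y < Real.exp (-M)) : M < -Real.log y := by
  have := Real.log_lt_log hy0 hyM
  rw [Real.log_exp] at this
  linarith

/-- generic: a function that is `h ∘ (-log)` for positive arguments, `0` for
nonpositive ones, with `h` continuous on `Ici 0` and vanishing beyond `M`,
is continuous on `Icc 0 1`. -/
lemma comp_neglog_contOn (h : ℝ → ℝ) (hh : ContinuousOn h (Ici 0))
    (hM : ∀ x, M < x → h x = 0) (hM1 : 1 ≤ M) (F : ℝ → ℝ)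
    (hF : ∀ y : ℝ, 0 < y → F y = h (-Real.log y)) (hF0 : ∀ y : ℝ, y ≤ 0 → F y = 0) :
    ContinuousOn F (Icc 0 1) := by
  intro y hy
  rcases lt_or_ge y (Real.exp (-M)) with hsmall | hbig
  · have hmem : Iio (Real.exp (-M)) ∈ nhds y := Iio_mem_nhds hsmall
    have hev : F =ᶠ[nhds y] (fun _ => 0) := by
      filter_upwards [hmem] with z hz
      rcases le_or_gt z 0 with hz0 | hz0
      · exact hF0 z hz0
      · rw [hF z hz0]
        exact hM _ (neglog_gt hz0 hz)
    exact (continuousAt_const.congr hev.symm).continuousWithinAt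
  · have hy0 : 0 < y := lt_of_lt_of_le (Real.exp_pos _) hbig
    have hIoi : Ioi (0:ℝ) ∈ nhds y := Ioi_mem_nhds hy0
    rw [← continuousWithinAt_inter hIoi]
    have hcomp : ContinuousWithinAt (fun z => h (-Real.log z)) (Icc 0 1 ∩ Ioi 0) y := by
      apply ContinuousWithinAt.comp (t := Ici 0)
      · exact hh _ (neglog_mem hy0 hy.2)
      · exact ((Real.continuousAt_log (ne_of_gt hy0)).neg).continuousWithinAt
      · intro z hz
        exact neglog_mem hz.2 hz.1.2
    exact hcomp.congr (fun z hz => hF z hz.2) (hF y hy0)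

lemma Pfun_contOn (hfc : ContinuousOn f (Ici 0))
    (hM : ∀ x, M ≤ x → f x = 0) (hM1 : 1 ≤ M) :
    ContinuousOn (Pfun f) (Icc 0 1) :=
  comp_neglog_contOn f hfc (fun x hx => hM x (le_of_lt hx)) hM1 (Pfun f)
    (fun _ h => Pfun_pos h) (fun y hy => by simp [Pfun, hy])

lemma derivWithin_zero_of_gt (hM : ∀ x, M ≤ x → f x = 0) (hM1 : 1 ≤ M)
    {x : ℝ} (hx : M < x) : derivWithin f (Ici 0) x = 0 := by
  have hev : f =ᶠ[nhdsWithin x (Ici 0)] (fun _ => 0) := by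
    have : Ioi M ∈ nhdsWithin x (Ici 0) :=
      mem_nhdsWithin_of_mem_nhds (Ioi_mem_nhds hx)
    filter_upwards [this] with z hz
    exact hM z (le_of_lt hz)
  rw [hev.derivWithin_eq (hM x (le_of_lt hx))]
  have hx0 : x ∈ Ici (0:ℝ) := by simp only [mem_Ici]; linarith
  exact congrFun (derivWithin_const (Ici 0) (0:ℝ)) x

lemma gfun_contOn (hf : ContDiffOn ℝ 2 f (Ici 0))
    (hM : ∀ x, M ≤ x → f x = 0) (hM1 : 1 ≤ M) :
    ContinuousOn (gfun f) (Icc 0 1) := by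
  have hD : ContinuousOn (derivWithin f (Ici 0)) (Ici 0) :=
    hf.continuousOn_derivWithin (uniqueDiffOn_Ici 0) one_le_two
  -- continuity of y ↦ -(D (-log y))/y handled via product structure
  intro y hy
  rcases lt_or_ge y (Real.exp (-M)) with hsmall | hbig
  · have hmem : Iio (Real.exp (-M)) ∈ nhds y := Iio_mem_nhds hsmall
    have hev : gfun f =ᶠ[nhds y] (fun _ => 0) := by
      filter_upwards [hmem] with z hz
      rcases le_or_gt z 0 with hz0 | hz0
      · simp [gfun, hz0]
      · rw [gfun_pos hz0, derivWithin_zero_of_gt hM hM1 (neglog_gt hz0 hz)]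
        simp
    exact (continuousAt_const.congr hev.symm).continuousWithinAt
  · have hy0 : 0 < y := lt_of_lt_of_le (Real.exp_pos _) hbig
    have hIoi : Ioi (0:ℝ) ∈ nhds y := Ioi_mem_nhds hy0
    rw [← continuousWithinAt_inter hIoi]
    have hcomp : ContinuousWithinAt
        (fun z => derivWithin f (Ici 0) (-Real.log z)) (Icc 0 1 ∩ Ioi 0) y := by
      refine ContinuousWithinAt.comp (g := derivWithin f (Ici 0))
        (f := fun z => -Real.log z) (t := Ici 0) ?_ ?_ ?_
      · exact hD _ (neglog_mem hy0 hy.2)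
      · exact ((Real.continuousAt_log (ne_of_gt hy0)).neg).continuousWithinAt
      · intro z hz
        exact neglog_mem hz.2 hz.1.2
    have : ContinuousWithinAt
        (fun z => -(derivWithin f (Ici 0) (-Real.log z)) / z) (Icc 0 1 ∩ Ioi 0) y :=
      (hcomp.neg).div continuousWithinAt_id (ne_of_gt hy0)
    exact this.congr (fun z hz => gfun_pos hz.2) (gfun_pos hy0)

lemma hasDerivAt_Pfun (hf : ContDiffOn ℝ 2 f (Ici 0)) {y : ℝ} (hy : y ∈ Ioo (0:ℝ) 1) :
    HasDerivAt (Pfun f) (gfun f y) y := by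
  have hy0 := hy.1
  have hlog : 0 < -Real.log y := by
    have := Real.log_neg hy.1 hy.2
    linarith
  have hnhds : Ici (0:ℝ) ∈ nhds (-Real.log y) := Ici_mem_nhds hlog
  have hdiff : DifferentiableAt ℝ f (-Real.log y) :=
    ((hf.differentiableOn two_ne_zero).differentiableAt hnhds)
  have hD : HasDerivAt f (derivWithin f (Ici 0) (-Real.log y)) (-Real.log y) := by
    rw [derivWithin_of_mem_nhds hnhds]
    exact hdiff.hasDerivAt
  have hl : HasDerivAt (fun z : ℝ => -Real.log z) (-(y⁻¹)) y :=
    (Real.hasDerivAt_log (ne_of_gt hy0)).neg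
  have hcomp := hD.comp y hl
  have hev : Pfun f =ᶠ[nhds y] (fun z => f (-Real.log z)) := by
    filter_upwards [Ioi_mem_nhds hy0] with z hz
    exact Pfun_pos hz
  have := hcomp.congr_of_eventuallyEq hev
  refine this.congr_deriv ?_
  rw [gfun_pos hy0]
  field_simp

lemma mvt_xi {P g : ℝ → ℝ} (hP : ContinuousOn P (Icc 0 1))
    (hPg : ∀ y ∈ Ioo (0:ℝ) 1, HasDerivAt P (g y) y) {n : ℕ} (hn : 1 ≤ n)
    {k : ℕ} (hk : k < n) :
    ∃ ξ ∈ Ioo ((k:ℝ)/n) (((k:ℝ)+1)/n),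
      g ξ = (n:ℝ) * (P (((k:ℝ)+1)/n) - P ((k:ℝ)/n)) := by
  have hnR : (0:ℝ) < n := by exact_mod_cast hn
  have hk1R : (k:ℝ) + 1 ≤ n := by exact_mod_cast hk
  have hab : (k:ℝ)/n < ((k:ℝ)+1)/n := by
    rw [div_lt_div_iff₀ hnR hnR]
    nlinarith
  have hIccsub : Icc ((k:ℝ)/n) (((k:ℝ)+1)/n) ⊆ Icc 0 1 :=
    Icc_subset_Icc (by positivity) ((div_le_one hnR).mpr hk1R)
  have hIoosub : Ioo ((k:ℝ)/n) (((k:ℝ)+1)/n) ⊆ Ioo 0 1 := by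
    intro z hz
    constructor
    · exact lt_of_le_of_lt (by positivity) hz.1
    · exact lt_of_lt_of_le hz.2 ((div_le_one hnR).mpr hk1R)
  obtain ⟨c, hc, heq⟩ := exists_hasDerivAt_eq_slope P g hab (hP.mono hIccsub)
    (fun z hz => hPg z (hIoosub hz))
  refine ⟨c, hc, ?_⟩
  rw [heq]
  have hd : ((k:ℝ)+1)/n - (k:ℝ)/n = 1/n := by ring
  rw [hd, div_div_eq_mul_div, div_one]
  ring

lemma xi_bound {m k : ℕ} (hm : 1 ≤ m) (hk : k ≤ m) {ξ : ℝ}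
    (hξ : ξ ∈ Ioo ((k:ℝ)/((m:ℝ)+1)) (((k:ℝ)+1)/((m:ℝ)+1))) :
    ξ ∈ Icc (0:ℝ) 1 ∧ |ξ - (k:ℝ)/m| ≤ 2/m := by
  have hmR : (0:ℝ) < m := by exact_mod_cast hm
  have hm1R : (0:ℝ) < (m:ℝ)+1 := by linarith
  have hkR : (k:ℝ) ≤ m := by exact_mod_cast hk
  have hk0 : (0:ℝ) ≤ k := Nat.cast_nonneg k
  obtain ⟨h1, h2⟩ := hξ
  have hl : (0:ℝ) ≤ (k:ℝ)/((m:ℝ)+1) := by positivity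
  have hu : ((k:ℝ)+1)/((m:ℝ)+1) ≤ 1 := by
    rw [div_le_one hm1R]; linarith
  refine ⟨⟨le_of_lt (lt_of_le_of_lt hl h1), le_of_lt (lt_of_lt_of_le h2 hu)⟩, ?_⟩
  rw [abs_sub_le_iff]
  constructor
  · have e2 : ((k:ℝ)+1)/((m:ℝ)+1) ≤ ((k:ℝ)+1)/m := by
      rw [div_le_div_iff₀ hm1R hmR]
      nlinarith
    have e3 : ((k:ℝ)+1)/m = (k:ℝ)/m + 1/m := by ring
    have e4 : (1:ℝ)/m ≤ 2/m := by
      rw [div_le_div_iff₀ hmR hmR]; linarith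
    linarith
  · have hden : (0:ℝ) < (m:ℝ)*((m:ℝ)+1) := mul_pos hmR hm1R
    have e2 : (k:ℝ)/m - (k:ℝ)/((m:ℝ)+1) = (k:ℝ)/((m:ℝ)*((m:ℝ)+1)) := by
      field_simp
      ring
    have e3 : (k:ℝ)/((m:ℝ)*((m:ℝ)+1)) ≤ (m:ℝ)/((m:ℝ)*((m:ℝ)+1)) := by
      rw [div_le_div_iff₀ hden hden]
      nlinarith
    have e4 : (m:ℝ)/((m:ℝ)*((m:ℝ)+1)) = 1/((m:ℝ)+1) := by
      field_simp
    have e5 : (1:ℝ)/((m:ℝ)+1) ≤ 2/m := by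
      rw [div_le_div_iff₀ hm1R hmR]; linarith
    linarith

lemma fseq_eq_bernstein {f q : ℝ → ℝ} (hq : ∀ y ∈ Ioc (0:ℝ) 1, q y = f (-Real.log y))
    (hq0 : q 0 = 0) {n : ℕ} (hn : 1 ≤ n) (x : ℝ) :
    fseq f n x = bernsteinPoly q n (Real.exp (-x)) := by
  have hnR : (0:ℝ) < n := by exact_mod_cast hn
  unfold fseq bernsteinPoly
  have hins : Finset.range (n+1) = insert 0 (Finset.Icc 1 n) := by
    ext a; simp only [Finset.mem_range, Finset.mem_insert, Finset.mem_Icc]; omega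
  rw [hins, Finset.sum_insert (by simp)]
  simp only [Nat.cast_zero, zero_div, hq0, zero_mul, zero_add]
  refine Finset.sum_congr rfl fun r hr => ?_
  obtain ⟨hr1, hrn⟩ := Finset.mem_Icc.mp hr
  have hrR : (0:ℝ) < r := by exact_mod_cast hr1
  have hmem : (r:ℝ)/n ∈ Ioc (0:ℝ) 1 :=
    ⟨div_pos hrR hnR, (div_le_one hnR).mpr (by exact_mod_cast hrn)⟩
  rw [hq _ hmem, ← Real.exp_nat_mul, mul_neg, ← neg_mul]
  ring

/-- with `p(x) = f(−log x)` on `(0,1]`, `p(0)=0`, one has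
`f_n(x) = B_n(p, e^{−x})` for all `x ≥ 0`, and `f_n → f`, `f_n′ → f′` uniformly on `[0,∞)`. -/
theorem stmt4 (f p : ℝ → ℝ)
    (hf : ContDiffOn ℝ 2 f (Ici 0))
    (hsupp : ∃ M : ℝ, ∀ x, M ≤ x → f x = 0)
    (hp : ∀ x ∈ Ioc (0 : ℝ) 1, p x = f (-Real.log x))
    (hp0 : p 0 = 0) :
    (∀ n : ℕ, 1 ≤ n → ∀ x : ℝ, 0 ≤ x → fseq f n x = bernsteinPoly p n (Real.exp (-x))) ∧
    TendstoUniformlyOn (fun n => fseq f n) f atTop (Ici 0) ∧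
    TendstoUniformlyOn (fun n x => deriv (fseq f n) x)
      (fun x => derivWithin f (Ici 0) x) atTop (Ici 0) := by
  classical
  obtain ⟨M₀, hM₀⟩ := hsupp
  have hM : ∀ x, max M₀ 1 ≤ x → f x = 0 := fun x hx => hM₀ x (le_trans (le_max_left _ _) hx)
  have hM1 : (1:ℝ) ≤ max M₀ 1 := le_max_right _ _
  have hPc : ContinuousOn (Pfun f) (Icc 0 1) := Pfun_contOn hf.continuousOn hM hM1
  have hgc : ContinuousOn (gfun f) (Icc 0 1) := gfun_contOn hf hM hM1
  have hPq : ∀ y ∈ Ioc (0:ℝ) 1, Pfun f y = f (-Real.log y) := fun y hy => Pfun_pos hy.1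
  have hP0 : Pfun f 0 = 0 := by simp [Pfun]
  refine ⟨fun n hn x _ => fseq_eq_bernstein hp hp0 hn x, ?_, ?_⟩
  · -- uniform convergence of fseq to f
    rw [Metric.tendstoUniformlyOn_iff]
    intro ε hε
    obtain ⟨N, hN1, hN⟩ := core_approx (Pfun f) hPc ε hε
    filter_upwards [eventually_ge_atTop N] with n hn
    intro x hx
    have hn1 : 1 ≤ n := le_trans hN1 hn
    have hnR : (0:ℝ) < n := by exact_mod_cast hn1
    have hy0 : 0 < Real.exp (-x) := Real.exp_pos _
    have hx' : (0:ℝ) ≤ x := hx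
    have hy1 : Real.exp (-x) ≤ 1 := by
      rw [show (1:ℝ) = Real.exp 0 from (Real.exp_zero).symm]
      exact Real.exp_le_exp.mpr (by linarith)
    have hyI : Real.exp (-x) ∈ Icc (0:ℝ) 1 := ⟨le_of_lt hy0, hy1⟩
    rw [Real.dist_eq, fseq_eq_bernstein hPq hP0 hn1 x]
    have hfx : f x = Pfun f (Real.exp (-x)) := by
      rw [Pfun_pos hy0, Real.log_exp, neg_neg]
    rw [hfx]
    have key := hN n hn (fun k => (k:ℝ)/n)
      (fun k hk => ⟨by positivity, (div_le_one hnR).mpr (by exact_mod_cast hk)⟩)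
      (fun k hk => by simp; positivity)
      (Real.exp (-x)) hyI
    rw [abs_sub_comm]
    exact key
  · -- uniform convergence of derivatives
    rw [Metric.tendstoUniformlyOn_iff]
    intro ε hε
    obtain ⟨N, hN1, hN⟩ := core_approx (gfun f) hgc ε hε
    filter_upwards [eventually_ge_atTop (N+1)] with n hn
    intro x hx
    obtain ⟨m, rfl⟩ : ∃ m, n = m + 1 := ⟨n - 1, by omega⟩
    have hn1 : 1 ≤ m + 1 := by omega
    have hmN : N ≤ m := by omega
    have hm1 : 1 ≤ m := by omega
    have hmR : (0:ℝ) < m := by exact_mod_cast hm1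
    have hy0 : 0 < Real.exp (-x) := Real.exp_pos _
    have hx' : (0:ℝ) ≤ x := hx
    have hy1 : Real.exp (-x) ≤ 1 := by
      rw [show (1:ℝ) = Real.exp 0 from (Real.exp_zero).symm]
      exact Real.exp_le_exp.mpr (by linarith)
    have hyI : Real.exp (-x) ∈ Icc (0:ℝ) 1 := ⟨le_of_lt hy0, hy1⟩
    -- choose MVT nodes
    have hmvt : ∀ k, k < m + 1 → ∃ ξ ∈ Ioo ((k:ℝ)/(m+1:ℕ)) (((k:ℝ)+1)/(m+1:ℕ)),
        gfun f ξ = ((m+1:ℕ):ℝ) * (Pfun f (((k:ℝ)+1)/(m+1:ℕ)) - Pfun f ((k:ℝ)/(m+1:ℕ))) :=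
      fun k hk => mvt_xi hPc (fun z hz => hasDerivAt_Pfun hf hz) hn1 hk
    set Ξ : ℕ → ℝ := fun k => if h : k < m + 1 then (hmvt k h).choose else 0 with hΞdef
    have hΞspec : ∀ k, (h : k < m + 1) → Ξ k ∈ Ioo ((k:ℝ)/(m+1:ℕ)) (((k:ℝ)+1)/(m+1:ℕ)) ∧
        gfun f (Ξ k) = ((m+1:ℕ):ℝ) * (Pfun f (((k:ℝ)+1)/(m+1:ℕ)) - Pfun f ((k:ℝ)/(m+1:ℕ))) := by
      intro k h
      have := (hmvt k h).choose_spec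
      simp only [hΞdef, dif_pos h]
      exact this
    have hxb : ∀ k ≤ m, Ξ k ∈ Icc (0:ℝ) 1 ∧ |Ξ k - (k:ℝ)/m| ≤ 2/m := by
      intro k hk
      have hkn : k < m + 1 := by omega
      have hmem := (hΞspec k hkn).1
      have hmem' : Ξ k ∈ Ioo ((k:ℝ)/((m:ℝ)+1)) (((k:ℝ)+1)/((m:ℝ)+1)) := by
        push_cast at hmem
        exact hmem
      exact xi_bound hm1 hk hmem'
    -- derivative of fseq
    have hexp : HasDerivAt (fun z : ℝ => Real.exp (-z)) (-Real.exp (-x)) x := by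
      have h1 : HasDerivAt (fun z : ℝ => -z) (-1 : ℝ) x := (hasDerivAt_id x).neg
      have := (Real.hasDerivAt_exp (-x)).comp x h1
      exact this.congr_deriv (by ring)
    have hB := (hasDerivAt_bernsteinPoly (Pfun f) (m+1) hn1 (Real.exp (-x))).comp x hexp
    have hfun : (bernsteinPoly (Pfun f) (m+1) ∘ fun z => Real.exp (-z)) = fseq f (m+1) :=
      funext fun z => (fseq_eq_bernstein hPq hP0 hn1 z).symm
    rw [hfun] at hB
    have hderiv := hB.deriv
    rw [Real.dist_eq, hderiv]
    -- rewrite the sum using the MVT nodes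
    have hsum : (∑ k ∈ Finset.range (m+1),
        ((m+1:ℕ):ℝ) * (Pfun f (((k:ℝ)+1)/(m+1:ℕ)) - Pfun f ((k:ℝ)/(m+1:ℕ))) *
          (((m+1)-1).choose k : ℝ) * Real.exp (-x) ^ k *
          (1 - Real.exp (-x)) ^ ((m+1) - 1 - k))
        = ∑ k ∈ Finset.range (m+1),
            gfun f (Ξ k) * (m.choose k : ℝ) * Real.exp (-x) ^ k *
              (1 - Real.exp (-x)) ^ (m - k) := by
      refine Finset.sum_congr rfl fun k hk => ?_
      have hkn : k < m + 1 := Finset.mem_range.mp hk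
      rw [← (hΞspec k hkn).2]
      norm_num
    -- target derivative
    have htarget : derivWithin f (Ici 0) x = gfun f (Real.exp (-x)) * (-Real.exp (-x)) := by
      rw [gfun_pos hy0, Real.log_exp, neg_neg]
      field_simp
    rw [htarget]
    have key := hN m hmN Ξ (fun k hk => (hxb k hk).1) (fun k hk => (hxb k hk).2)
      (Real.exp (-x)) hyI
    set S := ∑ k ∈ Finset.range (m+1),
        gfun f (Ξ k) * (m.choose k : ℝ) * Real.exp (-x) ^ k *
          (1 - Real.exp (-x)) ^ (m - k) with hS
    rw [hsum]
    have hfactor : gfun f (Real.exp (-x)) * (-Real.exp (-x)) - S * (-Real.exp (-x))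
        = (-Real.exp (-x)) * (gfun f (Real.exp (-x)) - S) := by ring
    rw [hfactor, abs_mul, abs_neg, abs_of_nonneg (le_of_lt hy0)]
    calc Real.exp (-x) * |gfun f (Real.exp (-x)) - S|
        ≤ 1 * |gfun f (Real.exp (-x)) - S| :=
          mul_le_mul_of_nonneg_right hy1 (abs_nonneg _)
      _ = |S - gfun f (Real.exp (-x))| := by rw [one_mul, abs_sub_comm]
      _ < ε := key
end PG
end

section
/- Assume condition (A). Then for all 0 < λ₀ < λ, lim_{k→∞} sup_{x ∈ E_k} e^{λ₀ x} | γ_k [ g_k(e^{−λ/k})^{kx} − e^{−λx} ] − x e^{−λx} R(λ) | = 0. -/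
open MeasureTheory Filter Set

/-- `pgfEval p s = Σ_j p_j s^j` is the generating function of the sequence `p`. -/
noncomputable def pgfEval (p : ℕ → ℝ) (s : ℝ) : ℝ := ∑' j : ℕ, p j * s ^ j

/-- `p` is (the coefficient sequence of) a probability generating function. -/
def IsPGF (p : ℕ → ℝ) : Prop := (∀ j, 0 ≤ p j) ∧ (∑' j : ℕ, p j) = 1


lemma pgfEval_mem {p : ℕ → ℝ} (hp : IsPGF p) {s : ℝ} (h0 : 0 ≤ s) (h1 : s ≤ 1) :
    0 ≤ pgfEval p s ∧ pgfEval p s ≤ 1 := by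
  obtain ⟨hnn, hsum⟩ := hp
  have hs : Summable p := by
    by_contra h
    rw [tsum_eq_zero_of_not_summable h] at hsum; norm_num at hsum
  have hle : ∀ j, p j * s ^ j ≤ p j := fun j =>
    mul_le_of_le_one_right (hnn j) (pow_le_one₀ h0 h1)
  have hnn' : ∀ j, 0 ≤ p j * s ^ j := fun j => mul_nonneg (hnn j) (pow_nonneg h0 j)
  have hs' : Summable (fun j => p j * s ^ j) := hs.of_nonneg_of_le hnn' hle
  constructor
  · exact tsum_nonneg hnn'
  · rw [pgfEval, ← hsum]; exact Summable.tsum_le_tsum hle hs' hs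

lemma powD (f q ρ : ℝ) (hρ1 : ρ ≤ 1) (hf0 : 0 ≤ f) (hfρ : f ≤ ρ) (hq0 : 0 ≤ q) (hqρ : q ≤ ρ) :
    ∀ n : ℕ, |f^(n+1) - q^(n+1) - ((n:ℝ)+1) * q^n * (f - q)| ≤ ((n:ℝ)+1)^2 * |f-q|^2 * ρ^(n-1) := by
  have hρ0 : 0 ≤ ρ := le_trans hf0 hfρ
  intro n
  induction n with
  | zero => simp; positivity
  | succ m ih =>
    have hid : f^(m+1+1) - q^(m+1+1) - ((↑(m+1):ℝ)+1) * q^(m+1) * (f - q)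
        = f * (f^(m+1) - q^(m+1) - ((m:ℝ)+1) * q^m * (f - q)) + ((m:ℝ)+1) * q^m * (f - q)^2 := by
      push_cast; ring
    have hkey : ρ * ρ^(m-1) ≤ ρ^m := by
      cases m with
      | zero => simpa using hρ1
      | succ l => rw [show l+1-1 = l from rfl, ← pow_succ']
    have hqm : q^m ≤ ρ^m := pow_le_pow_left₀ hq0 hqρ m
    have hsq : (f - q)^2 = |f - q|^2 := (sq_abs _).symm
    have hstep : |f^(m+1+1) - q^(m+1+1) - ((↑(m+1):ℝ)+1) * q^(m+1) * (f - q)|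
        ≤ f * |f^(m+1) - q^(m+1) - ((m:ℝ)+1) * q^m * (f - q)| + ((m:ℝ)+1) * q^m * (f-q)^2 := by
      rw [hid]
      calc |f * (f^(m+1) - q^(m+1) - ((m:ℝ)+1) * q^m * (f - q)) + ((m:ℝ)+1) * q^m * (f - q)^2|
          ≤ |f * (f^(m+1) - q^(m+1) - ((m:ℝ)+1) * q^m * (f - q))| + |((m:ℝ)+1) * q^m * (f - q)^2| :=
            abs_add_le _ _
        _ = f * |f^(m+1) - q^(m+1) - ((m:ℝ)+1) * q^m * (f - q)| + ((m:ℝ)+1) * q^m * (f-q)^2 := by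
            rw [abs_mul, abs_of_nonneg hf0]
            congr 1
            exact abs_of_nonneg (by positivity)
    refine hstep.trans ?_
    have h2 : f * |f^(m+1) - q^(m+1) - ((m:ℝ)+1) * q^m * (f - q)|
        ≤ ρ * (((m:ℝ)+1)^2 * |f-q|^2 * ρ^(m-1)) :=
      mul_le_mul hfρ ih (abs_nonneg _) hρ0
    have h3 : ((m:ℝ)+1) * q^m * (f-q)^2 ≤ ((m:ℝ)+1) * ρ^m * |f-q|^2 := by
      rw [hsq]; gcongr
    have h4 : ρ * (((m:ℝ)+1)^2 * |f-q|^2 * ρ^(m-1)) ≤ ((m:ℝ)+1)^2 * |f-q|^2 * ρ^m := by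
      calc ρ * (((m:ℝ)+1)^2 * |f-q|^2 * ρ^(m-1)) = ((m:ℝ)+1)^2 * |f-q|^2 * (ρ * ρ^(m-1)) := by ring
        _ ≤ ((m:ℝ)+1)^2 * |f-q|^2 * ρ^m := by gcongr
    have hm0 : (0:ℝ) ≤ (m:ℝ) := Nat.cast_nonneg m
    have hnn2 : 0 ≤ |f-q|^2 * ρ^m := by positivity
    calc f * |f^(m+1) - q^(m+1) - ((m:ℝ)+1) * q^m * (f - q)| + ((m:ℝ)+1) * q^m * (f-q)^2
        ≤ ((m:ℝ)+1)^2 * |f-q|^2 * ρ^m + ((m:ℝ)+1) * ρ^m * |f-q|^2 := by linarith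
      _ ≤ ((↑(m+1):ℝ)+1)^2 * |f-q|^2 * ρ^((m+1)-1) := by
          rw [show (m+1)-1 = m from rfl]; push_cast; nlinarith [hnn2]

lemma mul_exp_neg_le (d x : ℝ) (hd : 0 < d) (hx : 0 ≤ x) : x * Real.exp (-(d*x)) ≤ 1/d := by
  have h := Real.add_one_le_exp (d*x)
  have hxe : x ≤ Real.exp (d*x) / d := by rw [le_div_iff₀ hd]; nlinarith
  rw [Real.exp_neg]
  calc x * (Real.exp (d*x))⁻¹ ≤ (Real.exp (d*x)/d) * (Real.exp (d*x))⁻¹ := by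
        apply mul_le_mul_of_nonneg_right hxe (by positivity)
    _ = 1/d := by
        field_simp
lemma sq_mul_exp_neg_le (d x : ℝ) (hd : 0 < d) (hx : 0 ≤ x) : x^2 * Real.exp (-(d*x)) ≤ 4/d^2 := by
  have h := mul_exp_neg_le (d/2) x (by linarith) hx
  have h0 : 0 ≤ x * Real.exp (-(d/2*x)) := by positivity
  have hm := mul_le_mul h h h0 (by positivity)
  have hee : Real.exp (-(d/2*x)) * Real.exp (-(d/2*x)) = Real.exp (-(d*x)) := by
    rw [← Real.exp_add]; congr 1; ring
  calc x^2 * Real.exp (-(d*x)) = (x * Real.exp (-(d/2*x))) * (x * Real.exp (-(d/2*x))) := by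
        rw [← hee]; ring
    _ ≤ (1/(d/2)) * (1/(d/2)) := hm
    _ = 4/d^2 := by field_simp; ring

lemma perk_bound (n k : ℕ) (hk1 : 1 ≤ k)
    (γk lam₀ lam δ C Rl ε f : ℝ)
    (hδdef : δ = (lam - lam₀)/2)
    (hl0 : 0 < lam₀) (hll : lam₀ < lam)
    (hγk : 0 < γk) (hC : 0 < C) (hε : 0 < ε)
    (hf0 : 0 ≤ f)
    (hRb : |(k:ℝ) * γk * (f - Real.exp (-lam / k))| ≤ C)
    (hγ4 : C * Real.exp lam / δ ≤ γk)
    (hγ5 : C^2 * Real.exp (2*(lam₀+δ)) * (4/δ^2) / γk < ε/2)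
    (hΔ : Real.exp lam / (lam - lam₀) *
        |(k:ℝ) * γk * (f - Real.exp (-lam / k)) - Real.exp (-lam / k) * Rl| < ε/2) :
    Real.exp (lam₀ * (((n:ℝ)+1) / k)) *
      |γk * (f ^ (n+1) - Real.exp (-lam * (((n:ℝ)+1) / k)))
        - ((n:ℝ)+1) / k * Real.exp (-lam * (((n:ℝ)+1) / k)) * Rl| < ε := by
  set kr := (k:ℝ) with hkr
  have hk1' : (1:ℝ) ≤ kr := by rw [hkr]; exact_mod_cast hk1
  have hk0 : (0:ℝ) < kr := by linarith
  have h0l : 0 < lam := lt_trans hl0 hll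
  have hδ0 : 0 < δ := by rw [hδdef]; linarith
  set q := Real.exp (-lam / kr) with hq
  have hq0 : 0 < q := Real.exp_pos _
  have hq1 : q ≤ 1 := Real.exp_le_one_iff.mpr (by
    apply div_nonpos_of_nonpos_of_nonneg <;> linarith)
  set lam' := lam₀ + δ with hlam'
  have h0lam' : 0 < lam' := by rw [hlam']; linarith
  have hl'lam : lam' = lam - δ := by rw [hlam', hδdef]; ring
  set ρ := Real.exp (-lam' / kr) with hρ
  have hρ0 : 0 < ρ := Real.exp_pos _
  have hρ1 : ρ ≤ 1 := Real.exp_le_one_iff.mpr (by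
    apply div_nonpos_of_nonpos_of_nonneg <;> linarith)
  have hl'le : lam' ≤ lam := by rw [hl'lam]; linarith
  have hqρ : q ≤ ρ := by
    rw [hq, hρ]
    exact Real.exp_le_exp.mpr (by gcongr)
  -- bound on |f - q|
  set s := |f - q| with hs
  have hs0 : 0 ≤ s := abs_nonneg _
  have hkγ : 0 < kr * γk := mul_pos hk0 hγk
  have habsfq : s ≤ C / (kr * γk) := by
    rw [le_div_iff₀ hkγ]
    calc s * (kr * γk) = |kr * γk * (f - q)| := by
          rw [abs_mul, abs_of_pos hkγ]; ring
      _ ≤ C := hRb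
  -- f ≤ ρ
  have hfρ : f ≤ ρ := by
    have hρq : ρ = q * Real.exp (δ/kr) := by
      rw [hρ, hq, ← Real.exp_add]
      congr 1
      rw [hl'lam]
      field_simp
      ring
    have h1 : q * (δ/kr) ≤ ρ - q := by
      have := Real.add_one_le_exp (δ/kr)
      nlinarith [hq0, div_pos hδ0 hk0]
    have h2 : Real.exp (-lam) ≤ q := by
      rw [hq]
      apply Real.exp_le_exp.mpr
      rw [neg_div]
      have : lam / kr ≤ lam := div_le_self h0l.le hk1'
      linarith
    have h3 : C / (kr * γk) ≤ Real.exp (-lam) * δ / kr := by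
      rw [div_le_div_iff₀ hkγ hk0]
      have h4 : C * Real.exp lam ≤ γk * δ := by
        rw [div_le_iff₀ hδ0] at hγ4; linarith
      have hee : Real.exp lam * Real.exp (-lam) = 1 := by
        rw [← Real.exp_add]; simp
      have h5 := mul_le_mul_of_nonneg_right h4 (mul_nonneg (Real.exp_pos (-lam)).le hk0.le)
      have heq : C * kr = C * Real.exp lam * (Real.exp (-lam) * kr) := by
        linear_combination (-(C*kr)) * hee
      calc C * kr = C * Real.exp lam * (Real.exp (-lam) * kr) := heq
        _ ≤ γk * δ * (Real.exp (-lam) * kr) := h5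
        _ = Real.exp (-lam) * δ * (kr * γk) := by ring
    have h5 : Real.exp (-lam) * δ / kr ≤ ρ - q := by
      calc Real.exp (-lam) * δ / kr ≤ q * δ / kr := by gcongr
        _ = q * (δ/kr) := by ring
        _ ≤ ρ - q := h1
    have h6 : f - q ≤ s := le_abs_self _
    linarith [le_trans habsfq (le_trans h3 h5)]
  -- setup x and main algebra
  set x := ((n:ℝ)+1) / kr with hx
  have hx0 : 0 ≤ x := by positivity
  have hxkr : x * kr = (n:ℝ)+1 := div_mul_cancel₀ _ hk0.ne'
  have hqj : Real.exp (-lam * x) = q ^ (n+1) := by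
    rw [hq, ← Real.exp_nat_mul]
    congr 1
    rw [hx]
    push_cast
    ring
  rw [hqj]
  set A := f^(n+1) - q^(n+1) - ((n:ℝ)+1) * q^n * (f - q) with hA
  set Δ := kr * γk * (f - q) - q * Rl with hΔdef
  have halg : γk * (f^(n+1) - q^(n+1)) - x * q^(n+1) * Rl = γk * A + x * q^n * Δ := by
    rw [hA, hΔdef]
    linear_combination (-(γk * q^n * (f - q))) * hxkr
  rw [halg]
  -- split into two terms
  have hsplit : Real.exp (lam₀ * x) * |γk * A + x * q^n * Δ|
      ≤ Real.exp (lam₀ * x) * (γk * |A|) + Real.exp (lam₀ * x) * (x * q^n * |Δ|) := by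
    rw [← mul_add]
    apply mul_le_mul_of_nonneg_left ?_ (Real.exp_pos _).le
    calc |γk * A + x * q^n * Δ| ≤ |γk * A| + |x * q^n * Δ| := abs_add_le _ _
      _ = γk * |A| + x * q^n * |Δ| := by
          rw [abs_mul, abs_mul, abs_mul, abs_of_pos hγk, abs_of_nonneg hx0,
            abs_of_nonneg (pow_nonneg hq0.le n)]
  -- term 1
  have hAb : |A| ≤ ((n:ℝ)+1)^2 * s^2 * ρ^(n-1) := powD f q ρ hρ1 hf0 hfρ hq0.le hqρ n
  have hs2 : s^2 ≤ (C/(kr*γk))^2 := pow_le_pow_left₀ hs0 habsfq 2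
  have hρn : ρ^(n-1) ≤ Real.exp (-lam' * x) * Real.exp (2*lam'/kr) := by
    have h1 : ρ^((n-1)+2) ≤ ρ^(n+1) := pow_le_pow_of_le_one hρ0.le hρ1 (by omega)
    have h2 : ρ^(n+1) = Real.exp (-lam' * x) := by
      rw [hρ, ← Real.exp_nat_mul]
      congr 1
      rw [hx]; push_cast; ring
    have h3 : ρ^2 * Real.exp (2*lam'/kr) = 1 := by
      rw [hρ, ← Real.exp_nat_mul, ← Real.exp_add,
        show ((2:ℕ):ℝ) * (-lam'/kr) + 2*lam'/kr = 0 by push_cast; ring]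
      exact Real.exp_zero
    calc ρ^(n-1) = ρ^(n-1) * (ρ^2 * Real.exp (2*lam'/kr)) := by rw [h3, mul_one]
      _ = ρ^((n-1)+2) * Real.exp (2*lam'/kr) := by rw [pow_add]; ring
      _ ≤ ρ^(n+1) * Real.exp (2*lam'/kr) := by gcongr
      _ = Real.exp (-lam' * x) * Real.exp (2*lam'/kr) := by rw [h2]
  have hT1 : Real.exp (lam₀ * x) * (γk * |A|) < ε/2 := by
    have hb1 : Real.exp (lam₀ * x) * (γk * |A|)
        ≤ Real.exp (lam₀ * x) * (γk * (((n:ℝ)+1)^2 * (C/(kr*γk))^2 *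
            (Real.exp (-lam' * x) * Real.exp (2*lam'/kr)))) := by
      apply mul_le_mul_of_nonneg_left ?_ (Real.exp_pos _).le
      apply mul_le_mul_of_nonneg_left ?_ hγk.le
      calc |A| ≤ ((n:ℝ)+1)^2 * s^2 * ρ^(n-1) := hAb
        _ ≤ ((n:ℝ)+1)^2 * (C/(kr*γk))^2 * (Real.exp (-lam' * x) * Real.exp (2*lam'/kr)) := by
            gcongr
    have hid : Real.exp (lam₀ * x) * (γk * (((n:ℝ)+1)^2 * (C/(kr*γk))^2 *
          (Real.exp (-lam' * x) * Real.exp (2*lam'/kr))))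
        = (C^2 * Real.exp (2*lam'/kr) / γk) * (x^2 * (Real.exp (lam₀*x) * Real.exp (-lam'*x))) := by
      rw [hx]
      field_simp
    have hexp2 : Real.exp (lam₀*x) * Real.exp (-lam'*x) = Real.exp (-(δ*x)) := by
      rw [← Real.exp_add]
      congr 1
      rw [hlam']; ring
    have hxe : x^2 * Real.exp (-(δ*x)) ≤ 4/δ^2 := sq_mul_exp_neg_le δ x hδ0 hx0
    have he2 : Real.exp (2*lam'/kr) ≤ Real.exp (2*lam') :=
      Real.exp_le_exp.mpr (div_le_self (by linarith) hk1')
    calc Real.exp (lam₀ * x) * (γk * |A|)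
        ≤ (C^2 * Real.exp (2*lam'/kr) / γk) * (x^2 * Real.exp (-(δ*x))) := by
          rw [← hexp2, ← hid]; exact hb1
      _ ≤ (C^2 * Real.exp (2*lam') / γk) * (4/δ^2) := by
          apply mul_le_mul ?_ hxe (by positivity) (by positivity)
          gcongr
      _ = C^2 * Real.exp (2*lam') * (4/δ^2) / γk := by ring
      _ < ε/2 := by rw [hlam'] at *; exact hγ5
  -- term 2
  have hqn : q^n ≤ Real.exp (-lam * x) * Real.exp lam := by
    have h1 : q^n = Real.exp (-lam*x) * Real.exp (lam/kr) := by
      rw [hq, ← Real.exp_nat_mul, ← Real.exp_add]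
      congr 1
      rw [hx]
      field_simp
      ring
    rw [h1]
    gcongr
    exact div_le_self h0l.le hk1'
  have hT2 : Real.exp (lam₀ * x) * (x * q^n * |Δ|) < ε/2 := by
    calc Real.exp (lam₀ * x) * (x * q^n * |Δ|)
        ≤ Real.exp (lam₀ * x) * (x * (Real.exp (-lam * x) * Real.exp lam) * |Δ|) := by
          gcongr
      _ = (Real.exp lam * |Δ|) * (x * (Real.exp (lam₀*x) * Real.exp (-lam*x))) := by ring
      _ = (Real.exp lam * |Δ|) * (x * Real.exp (-((lam - lam₀)*x))) := by
          rw [show Real.exp (lam₀*x) * Real.exp (-lam*x) = Real.exp (-((lam-lam₀)*x)) by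
            rw [← Real.exp_add]; congr 1; ring]
      _ ≤ (Real.exp lam * |Δ|) * (1/(lam-lam₀)) := by
          apply mul_le_mul_of_nonneg_left (mul_exp_neg_le (lam-lam₀) x (by linarith) hx0)
            (by positivity)
      _ = Real.exp lam / (lam-lam₀) * |Δ| := by ring
      _ < ε/2 := hΔ
  calc Real.exp (lam₀ * x) * |γk * A + x * q^n * Δ|
      ≤ Real.exp (lam₀ * x) * (γk * |A|) + Real.exp (lam₀ * x) * (x * q^n * |Δ|) := hsplit
    _ < ε := by linarith

/-- under condition (A), for all `0 < λ₀ < λ`,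
`lim_{k→∞} sup_{x ∈ E_k} e^{λ₀ x} |γ_k[g_k(e^{−λ/k})^{kx} − e^{−λx}] − x e^{−λx} R(λ)| = 0`,
where `E_k = {j/k : j ∈ ℕ}`. -/
theorem stmt8
    (b c : ℝ) (hc : 0 ≤ c)
    (m : Measure ℝ) (hm : IntegrableOn (fun z => min z (z ^ 2)) (Ioi 0) m)
    (R : ℝ → ℝ)
    (hR : ∀ l, 0 ≤ l →
      R l = b * l + c * l ^ 2 + ∫ z in Ioi 0, (Real.exp (-l * z) - 1 + l * z) ∂m)
    (γ : ℕ → ℝ) (hγpos : ∀ k, 1 ≤ k → 0 < γ k) (hγmono : Monotone γ)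
    (hγtop : Tendsto γ atTop atTop)
    (gp : ℕ → ℕ → ℝ) (hgp : ∀ k, 1 ≤ k → IsPGF (gp k))
    -- condition (A)
    (condA1 : ∀ a : ℝ, 0 < a → ∃ L : NNReal, ∀ k : ℕ, 1 ≤ k → a ≤ (k : ℝ) →
      LipschitzOnWith L
        (fun l => (k : ℝ) * γ k * (pgfEval (gp k) (1 - l / k) - (1 - l / k)))
        (Icc 0 a))
    (condA2 : ∀ l : ℝ, 0 ≤ l →
      Tendsto (fun k : ℕ => (k : ℝ) * γ k * (pgfEval (gp k) (1 - l / k) - (1 - l / k)))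
        atTop (nhds (R l))) :
    ∀ lam₀ lam : ℝ, 0 < lam₀ → lam₀ < lam →
      ∀ ε > (0 : ℝ), ∀ᶠ k : ℕ in atTop, ∀ j : ℕ,
        Real.exp (lam₀ * ((j : ℝ) / k)) *
          |γ k * ((pgfEval (gp k) (Real.exp (-lam / k))) ^ j
              - Real.exp (-lam * ((j : ℝ) / k)))
            - ((j : ℝ) / k) * Real.exp (-lam * ((j : ℝ) / k)) * R lam| < ε := by
  intro lam₀ lam hl0 hll ε hε
  have h0lam : 0 < lam := lt_trans hl0 hll
  obtain ⟨L, hL⟩ := condA1 (lam + 1) (by linarith)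
  set C : ℝ := |R lam| + 1 with hCdef
  have hC0 : 0 < C := by positivity
  set δ : ℝ := (lam - lam₀) / 2 with hδdef
  have hδ0 : 0 < δ := by rw [hδdef]; linarith
  set G : ℕ → ℝ := fun k =>
    (k:ℝ) * γ k * (pgfEval (gp k) (Real.exp (-lam / (k:ℝ))) - Real.exp (-lam / (k:ℝ))) with hG
  -- uniform convergence of R_k at moving point: G k → R lam
  have hmain : ∀ᶠ k : ℕ in atTop, dist (G k) (R lam)
      ≤ (L:ℝ) * (lam^2 / k) +
        dist ((k:ℝ) * γ k * (pgfEval (gp k) (1 - lam / k) - (1 - lam / k))) (R lam) := by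
    filter_upwards [eventually_ge_atTop 1,
      tendsto_natCast_atTop_atTop.eventually_ge_atTop (lam+1)] with k hk1 hkr
    have hk1' : (1:ℝ) ≤ (k:ℝ) := by exact_mod_cast hk1
    have hk0 : (0:ℝ) < (k:ℝ) := by linarith
    set q := Real.exp (-lam / (k:ℝ)) with hq
    have hq0 : 0 < q := Real.exp_pos _
    have hq1 : q ≤ 1 := Real.exp_le_one_iff.mpr (by
      apply div_nonpos_of_nonpos_of_nonneg <;> linarith)
    set μ := (k:ℝ) * (1 - q) with hμ
    have hμ0 : 0 ≤ μ := mul_nonneg hk0.le (by linarith)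
    have hnd : -lam / (k:ℝ) = -(lam/(k:ℝ)) := neg_div _ _
    have haoe := Real.add_one_le_exp (-lam / (k:ℝ))
    have hμlam : μ ≤ lam := by
      have h1 : 1 - q ≤ lam / (k:ℝ) := by rw [hq]; rw [hnd] at haoe ⊢; linarith
      calc μ ≤ (k:ℝ) * (lam / (k:ℝ)) := mul_le_mul_of_nonneg_left h1 hk0.le
        _ = lam := by field_simp
    have hx1 : |(-lam / (k:ℝ))| ≤ 1 := by
      rw [hnd, abs_neg, abs_of_nonneg (by positivity)]
      rw [div_le_one hk0]; linarith
    have h2 := Real.abs_exp_sub_one_sub_id_le hx1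
    have hμd : |μ - lam| ≤ lam^2 / (k:ℝ) := by
      have hμeq : μ - lam = -((k:ℝ) * (Real.exp (-lam/(k:ℝ)) - 1 - (-lam/(k:ℝ)))) := by
        rw [hμ, hq]; field_simp; ring
      rw [hμeq, abs_neg, abs_mul, abs_of_pos hk0]
      calc (k:ℝ) * |Real.exp (-lam/(k:ℝ)) - 1 - (-lam/(k:ℝ))| ≤ (k:ℝ) * (-lam/(k:ℝ))^2 :=
            mul_le_mul_of_nonneg_left h2 hk0.le
        _ = lam^2 / (k:ℝ) := by field_simp
    have hLk := hL k hk1 (by linarith)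
    have hμmem : μ ∈ Icc (0:ℝ) (lam+1) := ⟨hμ0, by linarith⟩
    have hlmem : lam ∈ Icc (0:ℝ) (lam+1) := ⟨by linarith, by linarith⟩
    have hdle := (lipschitzOnWith_iff_dist_le_mul.mp hLk) μ hμmem lam hlmem
    have hqrw : 1 - μ/(k:ℝ) = q := by rw [hμ]; field_simp; ring
    rw [hqrw] at hdle
    have hGk : G k = (k:ℝ) * γ k * (pgfEval (gp k) q - q) := by rw [hG]
    calc dist (G k) (R lam)
        ≤ dist (G k) ((k:ℝ) * γ k * (pgfEval (gp k) (1 - lam/(k:ℝ)) - (1 - lam/(k:ℝ)))) +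
          dist ((k:ℝ) * γ k * (pgfEval (gp k) (1 - lam/(k:ℝ)) - (1 - lam/(k:ℝ)))) (R lam) :=
          dist_triangle _ _ _
      _ ≤ (L:ℝ) * (lam^2 / k) +
          dist ((k:ℝ) * γ k * (pgfEval (gp k) (1 - lam/(k:ℝ)) - (1 - lam/(k:ℝ)))) (R lam) := by
          apply add_le_add_left
          rw [hGk]
          refine hdle.trans ?_
          have : dist μ lam ≤ lam^2 / (k:ℝ) := by rw [Real.dist_eq]; exact hμd
          exact mul_le_mul_of_nonneg_left this L.coe_nonneg
  have hRμlim : Tendsto G atTop (nhds (R lam)) := by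
    rw [tendsto_iff_dist_tendsto_zero]
    have hB : Tendsto (fun k : ℕ => (L:ℝ) * (lam^2 / k) +
        dist ((k:ℝ) * γ k * (pgfEval (gp k) (1 - lam / k) - (1 - lam / k))) (R lam))
        atTop (nhds 0) := by
      have h1 : Tendsto (fun k : ℕ => (L:ℝ) * (lam^2 / k)) atTop (nhds 0) := by
        simpa using (tendsto_const_div_atTop_nhds_zero_nat (lam^2)).const_mul (L:ℝ)
      have h2 := tendsto_iff_dist_tendsto_zero.mp (condA2 lam h0lam.le)
      simpa using h1.add h2
    exact squeeze_zero' (Eventually.of_forall fun k => dist_nonneg) hmain hB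
  -- q_k → 1
  have hqlim : Tendsto (fun k : ℕ => Real.exp (-lam / (k:ℝ))) atTop (nhds 1) := by
    have h1 : Tendsto (fun k : ℕ => -lam / (k:ℝ)) atTop (nhds 0) :=
      tendsto_const_div_atTop_nhds_zero_nat (-lam)
    have := (Real.continuous_exp.tendsto 0).comp h1
    simpa [Function.comp_def] using this
  -- Δ_k → 0
  have hΔlim : Tendsto (fun k : ℕ => Real.exp lam / (lam - lam₀) *
      |G k - Real.exp (-lam / (k:ℝ)) * R lam|) atTop (nhds 0) := by
    have h1 : Tendsto (fun k : ℕ => G k - Real.exp (-lam / (k:ℝ)) * R lam) atTop (nhds 0) := by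
      have := hRμlim.sub (hqlim.mul_const (R lam))
      simpa using this
    have h2 := (h1.abs).const_mul (Real.exp lam / (lam - lam₀))
    simpa using h2
  have hE6 : ∀ᶠ k : ℕ in atTop, Real.exp lam / (lam - lam₀) *
      |G k - Real.exp (-lam / (k:ℝ)) * R lam| < ε/2 :=
    hΔlim.eventually_lt_const (by positivity)
  have hE5 : ∀ᶠ k : ℕ in atTop,
      C^2 * Real.exp (2*(lam₀+δ)) * (4/δ^2) / γ k < ε/2 := by
    have h1 : Tendsto (fun k : ℕ => C^2 * Real.exp (2*(lam₀+δ)) * (4/δ^2) / γ k)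
        atTop (nhds 0) := tendsto_const_nhds.div_atTop hγtop
    exact h1.eventually_lt_const (by positivity)
  have hE3 : ∀ᶠ k : ℕ in atTop, |G k| ≤ C :=
    hRμlim.abs.eventually_le_const (by rw [hCdef]; linarith)
  have hE4 : ∀ᶠ k : ℕ in atTop, C * Real.exp lam / δ ≤ γ k :=
    hγtop.eventually_ge_atTop _
  filter_upwards [eventually_ge_atTop 1, hE3, hE4, hE5, hE6] with k hk1 hRb hγ4 hγ5 hΔ
  intro j
  have hγk : 0 < γ k := hγpos k hk1
  have hk0 : (0:ℝ) < (k:ℝ) := by exact_mod_cast hk1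
  have hf0 : 0 ≤ pgfEval (gp k) (Real.exp (-lam / (k:ℝ))) := by
    refine (pgfEval_mem (hgp k hk1) (Real.exp_pos _).le ?_).1
    exact Real.exp_le_one_iff.mpr (by apply div_nonpos_of_nonpos_of_nonneg <;> linarith)
  cases j with
  | zero => simpa using hε
  | succ n =>
    have hRb' : |(k:ℝ) * γ k * (pgfEval (gp k) (Real.exp (-lam / (k:ℝ))) -
        Real.exp (-lam / (k:ℝ)))| ≤ C := by rw [hG] at hRb; exact hRb
    have hΔ' : Real.exp lam / (lam - lam₀) *
        |(k:ℝ) * γ k * (pgfEval (gp k) (Real.exp (-lam / (k:ℝ))) - Real.exp (-lam / (k:ℝ)))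
          - Real.exp (-lam / (k:ℝ)) * R lam| < ε/2 := by rw [hG] at hΔ; exact hΔ
    have := perk_bound n k hk1 (γ k) lam₀ lam δ C (R lam) ε
      (pgfEval (gp k) (Real.exp (-lam / (k:ℝ)))) hδdef hl0 hll hγk hC0 hε hf0 hRb' hγ4 hγ5 hΔ'
    push_cast
    exact this
end

section
/- Assume condition (A) and set u_k(λ) = k[1 − g_k(e^{−λ/k})] for λ ≥ 0. Then for every a ≥ 0, u_k(λ) → λ uniformly on [0,a] as k → ∞. -/
open MeasureTheory Filter Set

lemma my_exp_neg_le_quadratic {x : ℝ} (hx : 0 ≤ x) :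
    Real.exp (-x) ≤ 1 - x + x ^ 2 / 2 := by
  have hd : ∀ y : ℝ, HasDerivAt (fun t : ℝ => 1 - t + t ^ 2 / 2 - Real.exp (-t))
      (-1 + y + Real.exp (-y)) y := by
    intro y
    have hA : HasDerivAt (fun t : ℝ => t ^ 2 / 2) y y := by
      simpa using (hasDerivAt_pow 2 y).div_const 2
    have hB : HasDerivAt (fun t : ℝ => Real.exp (-t)) (-Real.exp (-y)) y := by
      simpa [Function.comp_def] using (Real.hasDerivAt_exp (-y)).comp y (hasDerivAt_neg y)
    have hC : HasDerivAt (fun t : ℝ => 1 - t) (-1) y := by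
      simpa using (hasDerivAt_id y).const_sub 1
    have := (hC.add hA).sub hB
    rw [show (-1 + y + Real.exp (-y)) = -1 + y - -Real.exp (-y) by ring]
    exact this
  have key : MonotoneOn (fun t : ℝ => 1 - t + t ^ 2 / 2 - Real.exp (-t)) (Set.Ici 0) := by
    apply monotoneOn_of_deriv_nonneg (convex_Ici 0)
    · exact fun y _ => (hd y).continuousAt.continuousWithinAt
    · exact fun y _ => ((hd y).differentiableAt).differentiableWithinAt
    · intro y hy
      rw [(hd y).deriv]
      have := Real.add_one_le_exp (-y)
      linarith
  have h0 := key (Set.self_mem_Ici) hx hx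
  simp [Real.exp_zero] at h0
  linarith

lemma my_pgfEval_one {p : ℕ → ℝ} (hp : IsPGF p) : pgfEval p 1 = 1 := by
  simp [pgfEval, hp.2]

/-- under condition (A), `u_k(λ) = k[1 − g_k(e^{−λ/k})]` converges to `λ`
uniformly on `[0,a]` for every `a ≥ 0`. -/
theorem stmt9
    (b c : ℝ) (hc : 0 ≤ c)
    (m : Measure ℝ) (hm : IntegrableOn (fun z => min z (z ^ 2)) (Ioi 0) m)
    (R : ℝ → ℝ)
    (hR : ∀ l, 0 ≤ l →
      R l = b * l + c * l ^ 2 + ∫ z in Ioi 0, (Real.exp (-l * z) - 1 + l * z) ∂m)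
    (γ : ℕ → ℝ) (hγpos : ∀ k, 1 ≤ k → 0 < γ k) (hγmono : Monotone γ)
    (hγtop : Tendsto γ atTop atTop)
    (gp : ℕ → ℕ → ℝ) (hgp : ∀ k, 1 ≤ k → IsPGF (gp k))
    -- condition (A)
    (condA1 : ∀ a : ℝ, 0 < a → ∃ L : NNReal, ∀ k : ℕ, 1 ≤ k → a ≤ (k : ℝ) →
      LipschitzOnWith L
        (fun l => (k : ℝ) * γ k * (pgfEval (gp k) (1 - l / k) - (1 - l / k)))
        (Icc 0 a))
    (condA2 : ∀ l : ℝ, 0 ≤ l →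
      Tendsto (fun k : ℕ => (k : ℝ) * γ k * (pgfEval (gp k) (1 - l / k) - (1 - l / k)))
        atTop (nhds (R l))) :
    ∀ a : ℝ, 0 ≤ a →
      TendstoUniformlyOn
        (fun (k : ℕ) (l : ℝ) => (k : ℝ) * (1 - pgfEval (gp k) (Real.exp (-l / k))))
        (fun l => l) atTop (Icc 0 a) := by
  intro a ha
  obtain ⟨L, hL⟩ := condA1 (a + 1) (by linarith)
  rw [Metric.tendstoUniformlyOn_iff]
  intro ε hε
  have h1 : ∀ᶠ k : ℕ in atTop, a + 1 ≤ (k : ℝ) :=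
    tendsto_natCast_atTop_atTop.eventually_ge_atTop (a + 1)
  have h2 : ∀ᶠ k : ℕ in atTop, a ^ 2 / ε < (k : ℝ) :=
    tendsto_natCast_atTop_atTop.eventually_gt_atTop _
  have h3 : ∀ᶠ k : ℕ in atTop, 2 * ((L : ℝ) * a + 1) / ε < γ k :=
    hγtop.eventually_gt_atTop _
  filter_upwards [h1, h2, h3] with k hk1 hk2 hk3
  intro l hl
  obtain ⟨hl0, hla⟩ := hl
  have hk0 : (0 : ℝ) < k := by linarith
  have hkn : 1 ≤ k := by exact_mod_cast (by linarith : (1 : ℝ) ≤ (k : ℝ))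
  have hγk : 0 < γ k := hγpos k hkn
  set s : ℝ := Real.exp (-l / k) with hs
  set t : ℝ := (k : ℝ) * (1 - s) with ht
  have hsle : 1 - l / (k : ℝ) ≤ s := by
    have h := Real.add_one_le_exp (-(l / (k : ℝ)))
    have hs' : s = Real.exp (-(l / (k : ℝ))) := by rw [hs, neg_div]
    rw [hs']; linarith
  have hs1 : s ≤ 1 := by
    rw [hs, neg_div, Real.exp_le_one_iff]
    exact neg_nonpos.mpr (div_nonneg hl0 hk0.le)
  have ht0 : 0 ≤ t := by
    apply mul_nonneg hk0.le
    linarith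
  have htl : t ≤ l := by
    have h : 1 - s ≤ l / k := by linarith
    calc t ≤ (k : ℝ) * (l / k) := mul_le_mul_of_nonneg_left h hk0.le
      _ = l := by field_simp
  -- quadratic bound: l - t ≤ l^2 / (2k) ≤ a^2/(2k)
  have hquad : l - t ≤ a ^ 2 / (2 * k) := by
    have hx : 0 ≤ l / k := div_nonneg hl0 hk0.le
    have hq := my_exp_neg_le_quadratic hx
    have hs' : s ≤ 1 - l / k + (l / k) ^ 2 / 2 := by
      rw [hs, neg_div]; exact hq
    have h1 : l - t ≤ (k : ℝ) * ((l / k) ^ 2 / 2) := by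
      have heq : l - t = (k : ℝ) * (s - 1 + l / k) := by
        rw [ht]; field_simp; ring
      rw [heq]
      apply mul_le_mul_of_nonneg_left _ hk0.le
      linarith
    have h2 : (k : ℝ) * ((l / k) ^ 2 / 2) = l ^ 2 / (2 * k) := by
      field_simp
    rw [h2] at h1
    have h3 : l ^ 2 / (2 * k) ≤ a ^ 2 / (2 * k) := by
      gcongr
    linarith
  -- Lipschitz bound on F
  have hLip := hL k hkn (by linarith)
  have htmem : t ∈ Icc (0 : ℝ) (a + 1) := ⟨ht0, by linarith⟩
  have h0mem : (0 : ℝ) ∈ Icc (0 : ℝ) (a + 1) := ⟨le_refl _, by linarith⟩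
  have hdist := hLip.dist_le_mul t htmem 0 h0mem
  have hts : 1 - t / k = s := by
    rw [ht]; field_simp; ring
  have hF0 : (k : ℝ) * γ k * (pgfEval (gp k) (1 - 0 / k) - (1 - 0 / k)) = 0 := by
    simp [my_pgfEval_one (hgp k hkn)]
  have hFt : (k : ℝ) * γ k * (pgfEval (gp k) (1 - t / k) - (1 - t / k))
      = (k : ℝ) * γ k * (pgfEval (gp k) s - s) := by
    rw [hts]
  simp only [hFt, hF0] at hdist
  have hdt0 : dist t 0 = t := by simp [Real.dist_eq, abs_of_nonneg ht0]
  rw [hdt0, Real.dist_eq, sub_zero] at hdist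
  have hbound : |(k : ℝ) * γ k * (pgfEval (gp k) s - s)| ≤ (L : ℝ) * a := by
    calc |(k : ℝ) * γ k * (pgfEval (gp k) s - s)| ≤ (L : ℝ) * t := hdist
      _ ≤ (L : ℝ) * a := mul_le_mul_of_nonneg_left (by linarith) L.coe_nonneg
  -- main estimate
  rw [Real.dist_eq]
  have hcancel : ((k : ℝ) * γ k * (pgfEval (gp k) s - s)) / γ k
      = (k : ℝ) * (pgfEval (gp k) s - s) := by
    field_simp
  have hkey : l - (k : ℝ) * (1 - pgfEval (gp k) s)
      = (l - t) + ((k : ℝ) * γ k * (pgfEval (gp k) s - s)) / γ k := by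
    rw [hcancel, ht]; ring
  rw [hkey]
  have habs : |(l - t) + ((k : ℝ) * γ k * (pgfEval (gp k) s - s)) / γ k|
      ≤ (l - t) + |(k : ℝ) * γ k * (pgfEval (gp k) s - s)| / γ k := by
    calc _ ≤ |l - t| + |((k : ℝ) * γ k * (pgfEval (gp k) s - s)) / γ k| := abs_add_le _ _
      _ = (l - t) + |(k : ℝ) * γ k * (pgfEval (gp k) s - s)| / γ k := by
          rw [abs_of_nonneg (by linarith), abs_div, abs_of_pos hγk]
  have hhalf1 : a ^ 2 / (2 * k) < ε / 2 := by
    rw [div_lt_div_iff₀ (by positivity) (by norm_num)]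
    rw [div_lt_iff₀ hε] at hk2
    nlinarith
  have hhalf2 : |(k : ℝ) * γ k * (pgfEval (gp k) s - s)| / γ k < ε / 2 := by
    have hLa : 0 ≤ (L : ℝ) * a := mul_nonneg L.coe_nonneg ha
    rw [div_lt_iff₀ hε] at hk3
    rw [div_lt_iff₀ hγk]
    have : (L : ℝ) * a < ε / 2 * γ k := by linarith
    exact lt_of_le_of_lt hbound this
  calc |(l - t) + ((k : ℝ) * γ k * (pgfEval (gp k) s - s)) / γ k|
      ≤ (l - t) + |(k : ℝ) * γ k * (pgfEval (gp k) s - s)| / γ k := habs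
    _ < ε / 2 + ε / 2 := by
        have := lt_of_le_of_lt hquad hhalf1
        linarith
    _ = ε := by ring
end

section
/- Assume condition (A) and set u_k(λ) = k[1 − g_k(e^{−λ/k})]. Then for every λ > 0, sup_{x ∈ [0,∞)} | (1 − u_k(λ)/k)^{kx} − e^{−λx} | → 0 as k → ∞. -/
open MeasureTheory Filter Set

private lemma exp_diff_bound {a b x : ℝ} (ha : 0 < a) (hab : a ≤ b) (hx : 0 ≤ x) :
    |Real.exp (-b * x) - Real.exp (-a * x)| ≤ (b - a) / a := by
  have h1 : Real.exp (-b * x) ≤ Real.exp (-a * x) := by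
    apply Real.exp_le_exp.2; nlinarith
  rw [abs_of_nonpos (by linarith)]
  rw [le_div_iff₀ ha]
  have key : Real.exp (-a * x) - Real.exp (-b * x)
      = Real.exp (-a * x) * (1 - Real.exp (-(b - a) * x)) := by
    rw [mul_sub, mul_one, ← Real.exp_add]; ring_nf
  have h2 : 1 - Real.exp (-(b - a) * x) ≤ (b - a) * x := by
    have := Real.add_one_le_exp (-(b - a) * x); linarith
  have h3 : a * x * Real.exp (-a * x) ≤ 1 := by
    have h4 := Real.add_one_le_exp (a * x)
    have h5 := Real.exp_pos (a * x)
    have h6 : Real.exp (-a * x) * Real.exp (a * x) = 1 := by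
      rw [← Real.exp_add]; ring_nf; exact Real.exp_zero
    nlinarith [Real.exp_pos (-a * x)]
  have hE := (Real.exp_pos (-a * x)).le
  nlinarith [mul_le_mul_of_nonneg_left h2 hE, mul_le_mul_of_nonneg_left h3 (sub_nonneg.2 hab)]

private lemma lim_lam' {lam : ℝ} (hlam : 0 < lam) :
    Tendsto (fun k : ℕ => (k : ℝ) * (1 - Real.exp (-lam / k))) atTop (nhds lam) := by
  have hexp : HasDerivAt Real.exp 1 0 := by simpa using Real.hasDerivAt_exp 0
  have hslope := hasDerivAt_iff_tendsto_slope.mp hexp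
  have htk : Tendsto (fun k : ℕ => -lam / (k : ℝ)) atTop (nhdsWithin 0 {(0:ℝ)}ᶜ) := by
    rw [tendsto_nhdsWithin_iff]
    refine ⟨tendsto_const_div_atTop_nhds_zero_nat _, ?_⟩
    filter_upwards [eventually_ge_atTop 1] with k hk
    have hk0 : (0:ℝ) < k := by exact_mod_cast hk
    simp only [mem_compl_iff, mem_singleton_iff]
    exact div_ne_zero (by linarith) hk0.ne'
  have h1 : Tendsto (fun k : ℕ => lam * slope Real.exp 0 (-lam / k)) atTop (nhds lam) := by
    have := (hslope.comp htk).const_mul lam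
    simpa using this
  refine Tendsto.congr' ?_ h1
  filter_upwards [eventually_ge_atTop 1] with k hk
  have hk0 : (0:ℝ) < k := by exact_mod_cast hk
  rw [slope_def_field, Real.exp_zero, sub_zero]
  field_simp [hlam.ne']
  ring


private lemma key {lam : ℝ} (hlam : 0 < lam) (γ : ℕ → ℝ)
    (hγpos : ∀ k : ℕ, 1 ≤ k → 0 < γ k) (hγtop : Tendsto γ atTop atTop)
    (g : ℕ → ℝ → ℝ) (Rlam : ℝ)
    (hLip : ∃ L : NNReal, ∀ k : ℕ, 1 ≤ k → lam ≤ (k : ℝ) →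
      LipschitzOnWith L (fun l => (k : ℝ) * γ k * (g k (1 - l / k) - (1 - l / k))) (Icc 0 lam))
    (hconv : Tendsto (fun k : ℕ => (k : ℝ) * γ k * (g k (1 - lam / k) - (1 - lam / k)))
      atTop (nhds Rlam))
    (hlimlam' : Tendsto (fun k : ℕ => (k : ℝ) * (1 - Real.exp (-lam / k))) atTop (nhds lam)) :
    Tendsto (fun k : ℕ => (k : ℝ) * (1 - g k (Real.exp (-lam / k)))) atTop (nhds lam) := by
  obtain ⟨L, hL⟩ := hLip
  set lam' : ℕ → ℝ := fun k => (k : ℝ) * (1 - Real.exp (-lam / k)) with hlam'def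
  set Rk : ℕ → ℝ → ℝ :=
    fun k l => (k : ℝ) * γ k * (g k (1 - l / k) - (1 - l / k)) with hRkdef
  -- lam' k ∈ Icc 0 lam for k ≥ 1
  have hmem : ∀ k : ℕ, 1 ≤ k → lam' k ∈ Icc 0 lam := by
    intro k hk
    have hk0 : (0:ℝ) < k := by exact_mod_cast hk
    have he1 : Real.exp (-lam / k) ≤ 1 := by
      rw [← Real.exp_zero]
      apply Real.exp_le_exp.2
      exact div_nonpos_of_nonpos_of_nonneg (by linarith) hk0.le
    have he2 : 1 - (lam / k) ≤ Real.exp (-lam / k) := by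
      have := Real.add_one_le_exp (-lam / k)
      have : -(lam / k) + 1 ≤ Real.exp (-lam / k) := by
        rw [neg_div] at this ⊢; exact Real.add_one_le_exp _
      linarith
    constructor
    · simp only [hlam'def]; nlinarith
    · simp only [hlam'def]
      have : (k:ℝ) * (1 - Real.exp (-lam / k)) ≤ (k:ℝ) * (lam / k) := by
        apply mul_le_mul_of_nonneg_left _ hk0.le
        linarith
      calc (k:ℝ) * (1 - Real.exp (-lam / k)) ≤ (k:ℝ) * (lam / k) := this
        _ = lam := by field_simp
  -- eventual bound on Rk k (lam' k)
  have hRconv : ∀ᶠ k : ℕ in atTop, |Rk k lam - Rlam| < 1 := by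
    have := Metric.tendsto_nhds.mp hconv 1 one_pos
    simpa [Real.dist_eq] using this
  have hbig : ∀ᶠ k : ℕ in atTop, lam ≤ (k : ℝ) := by
    have := tendsto_natCast_atTop_atTop (R := ℝ)
    exact this.eventually_ge_atTop lam
  set C : ℝ := (L : ℝ) * lam + (|Rlam| + 1) with hCdef
  have hbound : ∀ᶠ k : ℕ in atTop, |Rk k (lam' k)| ≤ C := by
    filter_upwards [hRconv, hbig, eventually_ge_atTop 1] with k h1 h2 hk1
    have hmemk := hmem k hk1
    have hlip := (hL k hk1 h2).dist_le_mul (lam' k) hmemk lam (by constructor <;> [exact hlam.le; rfl])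
    rw [Real.dist_eq, Real.dist_eq] at hlip
    have hd : |lam' k - lam| ≤ lam := by
      rw [abs_le]; exact ⟨by linarith [hmemk.1], by linarith [hmemk.2]⟩
    have h3 : |Rk k (lam' k) - Rk k lam| ≤ (L : ℝ) * lam := by
      calc |Rk k (lam' k) - Rk k lam| ≤ (L:ℝ) * |lam' k - lam| := hlip
        _ ≤ (L:ℝ) * lam := by
            apply mul_le_mul_of_nonneg_left hd L.2
    calc |Rk k (lam' k)| ≤ |Rk k (lam' k) - Rk k lam| + |Rk k lam| := by
          have := abs_sub_abs_le_abs_sub (Rk k (lam' k)) (Rk k lam); linarith [abs_nonneg (Rk k lam)]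
      _ ≤ (L:ℝ) * lam + (|Rlam| + 1) := by
          have : |Rk k lam| ≤ |Rlam| + 1 := by
            have := abs_sub_abs_le_abs_sub (Rk k lam) Rlam
            linarith [abs_nonneg (Rk k lam - Rlam)]
          linarith
  have hzero : Tendsto (fun k : ℕ => Rk k (lam' k) / γ k) atTop (nhds 0) := by
    have hCg : Tendsto (fun k : ℕ => C / γ k) atTop (nhds 0) :=
      tendsto_const_nhds.div_atTop hγtop
    apply squeeze_zero_norm' _ hCg
    filter_upwards [hbound, eventually_ge_atTop 1] with k hb hk1
    have hγk := hγpos k hk1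
    rw [Real.norm_eq_abs, abs_div, abs_of_pos hγk]
    gcongr
  have hfinal : Tendsto (fun k : ℕ => lam' k - Rk k (lam' k) / γ k) atTop (nhds lam) := by
    simpa using hlimlam'.sub hzero
  refine Tendsto.congr' ?_ hfinal
  filter_upwards [eventually_ge_atTop 1] with k hk1
  have hk0 : (0:ℝ) < k := by exact_mod_cast hk1
  have hγk := hγpos k hk1
  have hbase : 1 - lam' k / k = Real.exp (-lam / k) := by
    simp only [hlam'def]; field_simp; ring
  simp only [hRkdef, hbase]
  field_simp
  simp only [hlam'def, neg_div, div_eq_mul_inv]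
  ring



private lemma key2 {lam : ℝ} (hlam : 0 < lam) {δ : ℕ → ℝ}
    (hδ : Tendsto δ atTop (nhds lam)) {ε : ℝ} (hε : 0 < ε) :
    ∀ᶠ k : ℕ in atTop, ∀ x : ℝ, 0 ≤ x →
      |(1 - δ k / k) ^ ((k : ℝ) * x) - Real.exp (-lam * x)| < ε := by
  have hδk : Tendsto (fun k : ℕ => δ k / k) atTop (nhds 0) :=
    hδ.div_atTop tendsto_natCast_atTop_atTop
  have hδpos : ∀ᶠ k : ℕ in atTop, 0 < δ k := hδ.eventually (eventually_gt_nhds hlam)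
  have hδlt : ∀ᶠ k : ℕ in atTop, δ k < (k : ℝ) := by
    have h1 : ∀ᶠ k : ℕ in atTop, δ k < lam + 1 :=
      hδ.eventually (eventually_lt_nhds (by linarith))
    have h2 : ∀ᶠ k : ℕ in atTop, lam + 1 ≤ (k : ℝ) :=
      tendsto_natCast_atTop_atTop.eventually_ge_atTop (lam + 1)
    filter_upwards [h1, h2] with k ha hb; linarith
  -- μ k := -(k * log (1 - δ k / k)) tends to lam
  have hμ : Tendsto (fun k : ℕ => -((k : ℝ) * Real.log (1 - δ k / k))) atTop (nhds lam) := by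
    have hlog : HasDerivAt Real.log 1 1 := by simpa using Real.hasDerivAt_log one_ne_zero
    have hslope := hasDerivAt_iff_tendsto_slope.mp hlog
    have hbk : Tendsto (fun k : ℕ => 1 - δ k / k) atTop (nhdsWithin 1 {(1:ℝ)}ᶜ) := by
      rw [tendsto_nhdsWithin_iff]
      constructor
      · simpa using tendsto_const_nhds.sub hδk
      · filter_upwards [hδpos, eventually_ge_atTop 1] with k h1 hk1
        have hk0 : (0:ℝ) < k := by exact_mod_cast hk1
        simp only [mem_compl_iff, mem_singleton_iff]
        have : 0 < δ k / k := by positivity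
        intro h; rw [sub_eq_self] at h
        exact this.ne' (by simpa using h)
      -- δ k / k ≠ 0
    have h1 : Tendsto (fun k : ℕ => δ k * slope Real.log 1 (1 - δ k / k)) atTop (nhds lam) := by
      have := hδ.mul (hslope.comp hbk)
      simpa using this
    refine Tendsto.congr' ?_ h1
    filter_upwards [hδpos, eventually_ge_atTop 1] with k h1 hk1
    have hk0 : (0:ℝ) < k := by exact_mod_cast hk1
    rw [slope_def_field, Real.log_one, sub_zero]
    have hne : δ k ≠ 0 := h1.ne'
    field_simp [hne]
    ring
  have hclose1 : ∀ᶠ k : ℕ in atTop,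
      |-((k : ℝ) * Real.log (1 - δ k / k)) - lam| < lam / 2 := by
    have := Metric.tendsto_nhds.mp hμ (lam / 2) (by linarith)
    simpa [Real.dist_eq] using this
  have hclose2 : ∀ᶠ k : ℕ in atTop,
      |-((k : ℝ) * Real.log (1 - δ k / k)) - lam| < lam * ε / 4 := by
    have := Metric.tendsto_nhds.mp hμ (lam * ε / 4) (by positivity)
    simpa [Real.dist_eq] using this
  filter_upwards [hδlt, hclose1, hclose2, eventually_ge_atTop 1] with k hlt hc1 hc2 hk1
  intro x hx
  have hk0 : (0:ℝ) < k := by exact_mod_cast hk1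
  have hb : (0:ℝ) < 1 - δ k / k := by
    rw [sub_pos, div_lt_one hk0]; exact hlt
  obtain ⟨mu, hmu⟩ : ∃ mu : ℝ, mu = -((k : ℝ) * Real.log (1 - δ k / k)) := ⟨_, rfl⟩
  rw [← hmu] at hc1 hc2
  have hmupos : lam / 2 < mu := by
    have := abs_lt.mp hc1; linarith [this.1]
  have hd : |mu - lam| < lam * ε / 4 := hc2
  have hrw : (1 - δ k / k) ^ ((k : ℝ) * x) = Real.exp (-mu * x) := by
    rw [Real.rpow_def_of_pos hb]
    congr 1
    simp only [hmu]; ring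
  rw [hrw]
  have habs := abs_lt.mp hd
  rcases le_total mu lam with hcase | hcase
  · have hbd := exp_diff_bound (a := mu) (b := lam) (by linarith) hcase hx
    rw [abs_sub_comm] at hbd
    refine lt_of_le_of_lt hbd ?_
    rw [div_lt_iff₀ (by linarith)]
    nlinarith [mul_lt_mul_of_pos_left hmupos hε]
  · have hbd := exp_diff_bound (a := lam) (b := mu) hlam hcase hx
    refine lt_of_le_of_lt hbd ?_
    rw [div_lt_iff₀ hlam]
    nlinarith [mul_pos hlam hε]

/-- under condition (A), with `u_k(λ) = k[1 − g_k(e^{−λ/k})]`, for every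
`λ > 0` one has `sup_{x ≥ 0} |(1 − u_k(λ)/k)^{kx} − e^{−λx}| → 0` as `k → ∞`
(the power being a real power). -/
theorem stmt10
    (b c : ℝ) (hc : 0 ≤ c)
    (m : Measure ℝ) (hm : IntegrableOn (fun z => min z (z ^ 2)) (Ioi 0) m)
    (R : ℝ → ℝ)
    (hR : ∀ l, 0 ≤ l →
      R l = b * l + c * l ^ 2 + ∫ z in Ioi 0, (Real.exp (-l * z) - 1 + l * z) ∂m)
    (γ : ℕ → ℝ) (hγpos : ∀ k, 1 ≤ k → 0 < γ k) (hγmono : Monotone γ)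
    (hγtop : Tendsto γ atTop atTop)
    (gp : ℕ → ℕ → ℝ) (hgp : ∀ k, 1 ≤ k → IsPGF (gp k))
    -- condition (A)
    (condA1 : ∀ a : ℝ, 0 < a → ∃ L : NNReal, ∀ k : ℕ, 1 ≤ k → a ≤ (k : ℝ) →
      LipschitzOnWith L
        (fun l => (k : ℝ) * γ k * (pgfEval (gp k) (1 - l / k) - (1 - l / k)))
        (Icc 0 a))
    (condA2 : ∀ l : ℝ, 0 ≤ l →
      Tendsto (fun k : ℕ => (k : ℝ) * γ k * (pgfEval (gp k) (1 - l / k) - (1 - l / k)))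
        atTop (nhds (R l))) :
    ∀ lam : ℝ, 0 < lam →
      ∀ ε > (0 : ℝ), ∀ᶠ k : ℕ in atTop, ∀ x : ℝ, 0 ≤ x →
        |(1 - (k : ℝ) * (1 - pgfEval (gp k) (Real.exp (-lam / k))) / k) ^ ((k : ℝ) * x)
          - Real.exp (-lam * x)| < ε := by
  intro lam hlam ε hε
  have hδ : Tendsto (fun k : ℕ => (k : ℝ) * (1 - pgfEval (gp k) (Real.exp (-lam / k))))
      atTop (nhds lam) := by
    obtain ⟨L, hL⟩ := condA1 lam hlam
    exact key hlam γ hγpos hγtop (fun k s => pgfEval (gp k) s) (R lam)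
      ⟨L, fun k hk hk2 => hL k hk hk2⟩ (condA2 lam hlam.le) (lim_lam' hlam)
  have h2 := key2 hlam hδ hε
  filter_upwards [h2] with k hk x hx
  exact hk x hx
end

section
/- Let (Ω, ℱ, P) be a probability space with a filtration (𝒢_n)_{n≥0}, let (X_n)_{n≥0} be a (𝒢_n)-adapted process with values in [0,∞), and let κ be a Markov kernel on [0,∞) such that E[f(X_{n+1}) | 𝒢_n] = ∫ f(y) κ(X_n, dy) a.s. for every bounded Borel f and every n. Fix λ > 0 and γ > 0, and for μ > 0 set A_μ(x) = γ ( ∫ e^{−μy} κ(x,dy) − e^{−μx} ); assume C := sup_{x ≥ 0} max( |A_λ(x)|, |A_{2λ}(x)| ) < ∞. Then for all bounded (𝒢_n)-stopping times σ ≤ σ′, E[ ( e^{−λ X_{σ′}} − e^{−λ X_σ} )² ] ≤ 3 (C/γ) · E[σ′ − σ]. -/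
open MeasureTheory Filter Set

open scoped ENNReal

/-- If the integrals of the truncations `min g (M+1)` of a nonnegative function `g` against a
probability measure are all equal to `e`, then `∫ g = e`. -/
lemma aux_integral_min (ν : MeasureTheory.Measure ℝ) [IsProbabilityMeasure ν] (g : ℝ → ℝ)
    (hg : Measurable g) (hg0 : ∀ y, 0 ≤ g y) (e : ℝ)
    (h : ∀ M : ℕ, ∫ y, min (g y) (M + 1 : ℝ) ∂ν = e) :
    ∫ y, g y ∂ν = e := by
  have he : 0 ≤ e := by
    rw [← h 0]
    exact integral_nonneg fun y => le_min (hg0 y) (by norm_num)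
  set fM : ℕ → ℝ → ℝ≥0∞ := fun M y => ENNReal.ofReal (min (g y) (M + 1 : ℝ)) with hfM
  have hmeas : ∀ M, Measurable (fM M) := fun M =>
    (hg.min measurable_const).ennreal_ofReal
  have hmono : Monotone fM := by
    intro a b hab y
    refine ENNReal.ofReal_le_ofReal (min_le_min le_rfl ?_)
    have : (a : ℝ) ≤ b := Nat.cast_le.2 hab
    linarith
  have hsup : ∀ y, (⨆ M, fM M y) = ENNReal.ofReal (g y) := by
    intro y
    refine le_antisymm (iSup_le fun M => ENNReal.ofReal_le_ofReal (min_le_left _ _)) ?_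
    have hmin : min (g y) ((⌈g y⌉₊ : ℝ) + 1) = g y :=
      min_eq_left ((Nat.le_ceil _).trans (le_add_of_nonneg_right zero_le_one))
    exact le_iSup_of_le ⌈g y⌉₊ (le_of_eq (by rw [hfM]; simp only []; rw [hmin]))
  have hlin : ∀ M : ℕ, ∫⁻ y, fM M y ∂ν = ENNReal.ofReal e := by
    intro M
    have hint : Integrable (fun y => min (g y) (M + 1 : ℝ)) ν := by
      refine (integrable_const ((M : ℝ) + 1)).mono'
        ((hg.min measurable_const)).aestronglyMeasurable (ae_of_all _ fun y => ?_)
      rw [Real.norm_eq_abs, abs_of_nonneg (le_min (hg0 y) (by positivity))]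
      exact min_le_right _ _
    rw [hfM]
    rw [← ofReal_integral_eq_lintegral_ofReal hint
      (ae_of_all _ fun y => le_min (hg0 y) (by positivity)), h M]
  have hg_lint : ∫⁻ y, ENNReal.ofReal (g y) ∂ν = ENNReal.ofReal e := by
    calc ∫⁻ y, ENNReal.ofReal (g y) ∂ν = ∫⁻ y, ⨆ M, fM M y ∂ν :=
          lintegral_congr fun y => (hsup y).symm
      _ = ⨆ M, ∫⁻ y, fM M y ∂ν := lintegral_iSup hmeas hmono
      _ = ENNReal.ofReal e := by simp [hlin]
  rw [integral_eq_lintegral_of_nonneg_ae (ae_of_all _ hg0) hg.aestronglyMeasurable, hg_lint,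
    ENNReal.toReal_ofReal he]

/-- oscillation estimate for a `[0,∞)`-valued Markov chain. If
`A_μ(x) = γ(∫ e^{−μy} κ(x,dy) − e^{−μx})` satisfies `|A_λ(x)| ≤ C` and `|A_{2λ}(x)| ≤ C`
for all `x ≥ 0`, then for bounded stopping times `σ ≤ σ′`,
`E[(e^{−λX_{σ′}} − e^{−λX_σ})²] ≤ 3 (C/γ) E[σ′ − σ]`. -/
theorem stmt14 {Ω : Type*} {m0 : MeasurableSpace Ω} (μ : Measure Ω) [IsProbabilityMeasure μ]
    (𝒢 : Filtration ℕ m0) (X : ℕ → Ω → ℝ) (hadapt : Adapted 𝒢 X)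
    (hXpos : ∀ n ω, 0 ≤ X n ω)
    (κ : ProbabilityTheory.Kernel ℝ ℝ) [ProbabilityTheory.IsMarkovKernel κ]
    (hMarkov : ∀ f : ℝ → ℝ, Measurable f → (∃ C, ∀ x, |f x| ≤ C) → ∀ n,
      μ[fun ω => f (X (n + 1) ω)|𝒢 n] =ᵐ[μ] fun ω => ∫ y, f y ∂(κ (X n ω)))
    (lam γ : ℝ) (hlam : 0 < lam) (hγ : 0 < γ)
    (C : ℝ)
    (hC : ∀ x : ℝ, 0 ≤ x →
      |γ * ((∫ y, Real.exp (-lam * y) ∂(κ x)) - Real.exp (-lam * x))| ≤ C ∧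
      |γ * ((∫ y, Real.exp (-(2 * lam) * y) ∂(κ x)) - Real.exp (-(2 * lam) * x))| ≤ C)
    (σ σ' : Ω → ℕ) (hσ : IsStoppingTime 𝒢 (fun ω => (σ ω : WithTop ℕ)))
    (hσ' : IsStoppingTime 𝒢 (fun ω => (σ' ω : WithTop ℕ)))
    (hle : ∀ ω, σ ω ≤ σ' ω) (N : ℕ) (hbdd : ∀ ω, σ' ω ≤ N) :
    ∫ ω, (Real.exp (-lam * X (σ' ω) ω) - Real.exp (-lam * X (σ ω) ω)) ^ 2 ∂μ
      ≤ 3 * (C / γ) * ∫ ω, ((σ' ω : ℝ) - (σ ω : ℝ)) ∂μ := by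
  classical
  have hC0 : 0 ≤ C := le_trans (abs_nonneg _) (hC 0 le_rfl).1
  have hXm : ∀ m, Measurable (X m) := fun m => (hadapt m).mono (𝒢.le m) le_rfl
  have hgm : ∀ c : ℝ, Measurable fun y : ℝ => Real.exp (-c * y) :=
    fun c => (measurable_id.const_mul (-c)).exp
  have hgle : ∀ c : ℝ, 0 < c → ∀ m ω, Real.exp (-c * X m ω) ≤ 1 := by
    intro c hc m ω
    have hx := hXpos m ω
    calc Real.exp (-c * X m ω) ≤ Real.exp 0 := Real.exp_le_exp.2 (by nlinarith)
      _ = 1 := Real.exp_zero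
  -- The Markov property for the (unbounded on ℝ) exponential functions, via truncation
  have hMarkov' : ∀ c : ℝ, 0 < c → ∀ n, μ[fun ω => Real.exp (-c * X (n + 1) ω)|𝒢 n]
      =ᵐ[μ] fun ω => ∫ y, Real.exp (-c * y) ∂(κ (X n ω)) := by
    intro c hc n
    have hMk : ∀ M : ℕ, μ[fun ω => Real.exp (-c * X (n + 1) ω)|𝒢 n]
        =ᵐ[μ] fun ω => ∫ y, min (Real.exp (-c * y)) (M + 1 : ℝ) ∂(κ (X n ω)) := by
      intro M
      have hb : ∃ B, ∀ x, |min (Real.exp (-c * x)) (M + 1 : ℝ)| ≤ B := by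
        refine ⟨(M : ℝ) + 1, fun x => ?_⟩
        rw [abs_of_nonneg (le_min (Real.exp_pos _).le (by positivity))]
        exact min_le_right _ _
      have h := hMarkov (fun y => min (Real.exp (-c * y)) (M + 1 : ℝ))
        ((hgm c).min measurable_const) hb n
      have hfun : (fun ω => min (Real.exp (-c * X (n + 1) ω)) (M + 1 : ℝ))
          = fun ω => Real.exp (-c * X (n + 1) ω) := by
        funext ω
        refine min_eq_left ((hgle c hc _ ω).trans ?_)
        have : (0 : ℝ) ≤ M := Nat.cast_nonneg M
        linarith
      rwa [hfun] at h
    have hall : ∀ᵐ ω ∂μ, ∀ M : ℕ,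
        (μ[fun ω => Real.exp (-c * X (n + 1) ω)|𝒢 n]) ω
          = ∫ y, min (Real.exp (-c * y)) (M + 1 : ℝ) ∂(κ (X n ω)) :=
      ae_all_iff.2 hMk
    filter_upwards [hall] with ω hω
    exact (aux_integral_min (κ (X n ω)) _ (hgm c) (fun y => (Real.exp_pos _).le) _
      (fun M => (hω M).symm)).symm
  -- the indicator of {σ ≤ n < σ'}
  set S : ℕ → Set Ω := fun n => {ω | σ ω ≤ n ∧ n < σ' ω} with hS
  have hSmeas : ∀ n, MeasurableSet[𝒢 n] (S n) := by
    intro n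
    have hSeq : S n = {ω | σ ω ≤ n} ∩ {ω | σ' ω ≤ n}ᶜ := by
      ext ω
      simp only [hS, Set.mem_setOf_eq, Set.mem_inter_iff, Set.mem_compl_iff, not_le]
    rw [hSeq]
    exact (by simpa using hσ n : MeasurableSet[𝒢 n] {ω | σ ω ≤ n}).inter
      (by simpa using hσ' n : MeasurableSet[𝒢 n] {ω | σ' ω ≤ n}).compl
  set χ : ℕ → Ω → ℝ := fun n => (S n).indicator fun _ => (1 : ℝ) with hχ
  have hχsm : ∀ n, StronglyMeasurable[𝒢 n] (χ n) := fun n =>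
    stronglyMeasurable_const.indicator (hSmeas n)
  have hχ01 : ∀ n ω, χ n ω = if σ ω ≤ n ∧ n < σ' ω then 1 else 0 := fun n ω => by
    simp [hχ, Set.indicator_apply, hS, Set.mem_setOf_eq]
  have hχnn : ∀ n ω, 0 ≤ χ n ω := fun n ω => by rw [hχ01]; split <;> norm_num
  have hχabs : ∀ n ω, |χ n ω| ≤ 1 := fun n ω => by rw [hχ01]; split <;> norm_num
  have hχm0 : ∀ n, Measurable (χ n) := fun n => ((hχsm n).mono (𝒢.le n)).measurable
  -- integrability of bounded measurable functions
  have hIb : ∀ (f : Ω → ℝ) (b : ℝ), Measurable f → (∀ ω, |f ω| ≤ b) → Integrable f μ := by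
    intro f b hf hb
    exact (integrable_const b).mono' hf.aestronglyMeasurable
      (ae_of_all _ fun ω => by rw [Real.norm_eq_abs]; exact hb ω)
  -- measurability of the kernel integral
  have hKm : ∀ c : ℝ, Measurable fun x : ℝ => ∫ y, Real.exp (-c * y) ∂(κ x) := by
    intro c
    have h_unc : StronglyMeasurable (Function.uncurry fun (_ : ℝ) (y : ℝ) => Real.exp (-c * y)) :=
      ((hgm c).comp measurable_snd).stronglyMeasurable
    exact (MeasureTheory.StronglyMeasurable.integral_kernel_prod_right h_unc).measurable
  -- the core one-step estimate
  have core : ∀ c : ℝ, 0 < c →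
      (∀ x : ℝ, 0 ≤ x → |γ * ((∫ y, Real.exp (-c * y) ∂(κ x)) - Real.exp (-c * x))| ≤ C) →
      ∀ (n : ℕ) (φ : Ω → ℝ), StronglyMeasurable[𝒢 n] φ → (∀ ω, |φ ω| ≤ 1) →
      |∫ ω, χ n ω * φ ω * (Real.exp (-c * X (n + 1) ω) - Real.exp (-c * X n ω)) ∂μ|
        ≤ C / γ * ∫ ω, χ n ω ∂μ := by
    intro c hc hcC n φ hφsm hφb
    set K : Ω → ℝ := fun ω => ∫ y, Real.exp (-c * y) ∂(κ (X n ω)) with hK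
    have hKmeas : Measurable K := (hKm c).comp (hXm n)
    have hKdiff : ∀ ω, |K ω - Real.exp (-c * X n ω)| ≤ C / γ := by
      intro ω
      have h := hcC (X n ω) (hXpos n ω)
      rw [abs_mul, abs_of_pos hγ] at h
      rw [le_div_iff₀ hγ]
      nlinarith [abs_nonneg (K ω - Real.exp (-c * X n ω))]
    have hgXm : ∀ m, Measurable fun ω => Real.exp (-c * X m ω) := fun m => (hgm c).comp (hXm m)
    have hgXb : ∀ m ω, |Real.exp (-c * X m ω)| ≤ 1 := fun m ω => by
      rw [abs_of_pos (Real.exp_pos _)]; exact hgle c hc m ω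
    have hKb : ∀ ω, |K ω| ≤ C / γ + 1 := by
      intro ω
      have h1 := hKdiff ω
      have h2 := hgXb n ω
      calc |K ω| = |(K ω - Real.exp (-c * X n ω)) + Real.exp (-c * X n ω)| := by ring_nf
        _ ≤ |K ω - Real.exp (-c * X n ω)| + |Real.exp (-c * X n ω)| := abs_add_le _ _
        _ ≤ C / γ + 1 := by linarith
    have hφm0 : Measurable φ := (hφsm.mono (𝒢.le n)).measurable
    have hprod_b : ∀ ω, |χ n ω * φ ω| ≤ 1 := fun ω => by
      rw [abs_mul]; exact mul_le_one₀ (hχabs n ω) (abs_nonneg _) (hφb ω)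
    have hprod_χ : ∀ ω, |χ n ω * φ ω| ≤ χ n ω := by
      intro ω
      rw [abs_mul, abs_of_nonneg (hχnn n ω)]
      calc χ n ω * |φ ω| ≤ χ n ω * 1 := mul_le_mul_of_nonneg_left (hφb ω) (hχnn n ω)
        _ = χ n ω := mul_one _
    have hYint : Integrable (fun ω => Real.exp (-c * X (n + 1) ω)) μ :=
      hIb _ 1 (hgXm (n + 1)) (hgXb (n + 1))
    have hprod_sm : StronglyMeasurable[𝒢 n] (fun ω => χ n ω * φ ω) := (hχsm n).mul hφsm
    have hpull := condExp_stronglyMeasurable_mul_of_bound (𝒢.le n) hprod_sm hYint 1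
      (ae_of_all _ fun ω => by rw [Real.norm_eq_abs]; exact hprod_b ω)
    -- step 1: replace the future value by the kernel integral
    have hstep1 : ∫ ω, χ n ω * φ ω * Real.exp (-c * X (n + 1) ω) ∂μ
        = ∫ ω, χ n ω * φ ω * K ω ∂μ := by
      have e1 : ∫ ω, χ n ω * φ ω * Real.exp (-c * X (n + 1) ω) ∂μ
          = ∫ ω, ((fun ω => χ n ω * φ ω) * fun ω => Real.exp (-c * X (n + 1) ω)) ω ∂μ := by
        simp only [Pi.mul_apply]
      have e2 := integral_condExp (μ := μ) (𝒢.le n)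
        (f := (fun ω => χ n ω * φ ω) * fun ω => Real.exp (-c * X (n + 1) ω))
      have e3 : ∫ ω, (μ[(fun ω => χ n ω * φ ω) * fun ω => Real.exp (-c * X (n + 1) ω)|𝒢 n]) ω ∂μ
          = ∫ ω, χ n ω * φ ω * K ω ∂μ := by
        refine integral_congr_ae ?_
        filter_upwards [hpull, hMarkov' c hc n] with ω h1 h2
        rw [h1, Pi.mul_apply, h2]
      rw [e1, ← e2, e3]
    have i1 : Integrable (fun ω => χ n ω * φ ω * Real.exp (-c * X (n + 1) ω)) μ :=
      hIb _ 1 (((hχm0 n).mul hφm0).mul (hgXm (n + 1)))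
        (fun ω => by rw [abs_mul]; exact mul_le_one₀ (hprod_b ω) (abs_nonneg _) (hgXb (n + 1) ω))
    have i2 : Integrable (fun ω => χ n ω * φ ω * Real.exp (-c * X n ω)) μ :=
      hIb _ 1 (((hχm0 n).mul hφm0).mul (hgXm n))
        (fun ω => by rw [abs_mul]; exact mul_le_one₀ (hprod_b ω) (abs_nonneg _) (hgXb n ω))
    have i3 : Integrable (fun ω => χ n ω * φ ω * K ω) μ := by
      refine hIb _ (C / γ + 1) (((hχm0 n).mul hφm0).mul hKmeas) (fun ω => ?_)
      rw [abs_mul]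
      calc |χ n ω * φ ω| * |K ω| ≤ 1 * (C / γ + 1) :=
            mul_le_mul (hprod_b ω) (hKb ω) (abs_nonneg _) zero_le_one
        _ = C / γ + 1 := one_mul _
    have hsub : ∫ ω, χ n ω * φ ω * (Real.exp (-c * X (n + 1) ω) - Real.exp (-c * X n ω)) ∂μ
        = ∫ ω, χ n ω * φ ω * (K ω - Real.exp (-c * X n ω)) ∂μ := by
      calc ∫ ω, χ n ω * φ ω * (Real.exp (-c * X (n + 1) ω) - Real.exp (-c * X n ω)) ∂μ
          = ∫ ω, (χ n ω * φ ω * Real.exp (-c * X (n + 1) ω)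
              - χ n ω * φ ω * Real.exp (-c * X n ω)) ∂μ := by
            refine integral_congr_ae (ae_of_all _ fun ω => ?_); ring
        _ = (∫ ω, χ n ω * φ ω * Real.exp (-c * X (n + 1) ω) ∂μ)
              - ∫ ω, χ n ω * φ ω * Real.exp (-c * X n ω) ∂μ := integral_sub i1 i2
        _ = (∫ ω, χ n ω * φ ω * K ω ∂μ) - ∫ ω, χ n ω * φ ω * Real.exp (-c * X n ω) ∂μ := by
            rw [hstep1]
        _ = ∫ ω, (χ n ω * φ ω * K ω - χ n ω * φ ω * Real.exp (-c * X n ω)) ∂μ :=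
            (integral_sub i3 i2).symm
        _ = ∫ ω, χ n ω * φ ω * (K ω - Real.exp (-c * X n ω)) ∂μ := by
            refine integral_congr_ae (ae_of_all _ fun ω => ?_); ring
    rw [hsub]
    have ifull : Integrable (fun ω => χ n ω * φ ω * (K ω - Real.exp (-c * X n ω))) μ := by
      refine hIb _ (C / γ) (((hχm0 n).mul hφm0).mul (hKmeas.sub (hgXm n))) (fun ω => ?_)
      rw [abs_mul]
      calc |χ n ω * φ ω| * |K ω - Real.exp (-c * X n ω)| ≤ 1 * (C / γ) :=
            mul_le_mul (hprod_b ω) (hKdiff ω) (abs_nonneg _) zero_le_one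
        _ = C / γ := one_mul _
    have habs : ∀ ω, |χ n ω * φ ω * (K ω - Real.exp (-c * X n ω))| ≤ χ n ω * (C / γ) := by
      intro ω
      rw [abs_mul]
      calc |χ n ω * φ ω| * |K ω - Real.exp (-c * X n ω)|
          ≤ |χ n ω * φ ω| * (C / γ) := mul_le_mul_of_nonneg_left (hKdiff ω) (abs_nonneg _)
        _ ≤ χ n ω * (C / γ) :=
            mul_le_mul_of_nonneg_right (hprod_χ ω) (div_nonneg hC0 hγ.le)
    calc |∫ ω, χ n ω * φ ω * (K ω - Real.exp (-c * X n ω)) ∂μ|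
        ≤ ∫ ω, |χ n ω * φ ω * (K ω - Real.exp (-c * X n ω))| ∂μ := by
          have hni := norm_integral_le_integral_norm (μ := μ)
            (f := fun ω => χ n ω * φ ω * (K ω - Real.exp (-c * X n ω)))
          simpa only [Real.norm_eq_abs] using hni
      _ ≤ ∫ ω, χ n ω * (C / γ) ∂μ :=
          integral_mono ifull.abs ((hIb _ 1 (hχm0 n) (hχabs n)).mul_const _) habs
      _ = C / γ * ∫ ω, χ n ω ∂μ := by rw [integral_mul_const]; ring
  -- telescoping identity
  have tele : ∀ (u : ℕ → ℝ) (ω : Ω),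
      ∑ n ∈ Finset.range N, χ n ω * (u (n + 1) - u n) = u (σ' ω) - u (σ ω) := by
    intro u ω
    have h1 : ∀ n ∈ Finset.range N, χ n ω * (u (n + 1) - u n)
        = if n ∈ Finset.Ico (σ ω) (σ' ω) then u (n + 1) - u n else 0 := by
      intro n _
      rw [hχ01]
      by_cases h : σ ω ≤ n ∧ n < σ' ω
      · rw [if_pos h, if_pos (Finset.mem_Ico.2 h), one_mul]
      · rw [if_neg h, if_neg (fun hc => h (Finset.mem_Ico.1 hc)), zero_mul]
    rw [Finset.sum_congr rfl h1, Finset.sum_ite_mem]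
    have h2 : Finset.range N ∩ Finset.Ico (σ ω) (σ' ω) = Finset.Ico (σ ω) (σ' ω) := by
      refine Finset.inter_eq_right.2 fun n hn => ?_
      rw [Finset.mem_Ico] at hn
      exact Finset.mem_range.2 (lt_of_lt_of_le hn.2 (hbdd ω))
    rw [h2, Finset.sum_Ico_eq_sub _ (hle ω), Finset.sum_range_sub, Finset.sum_range_sub]
    ring
  have count : ∀ ω, ∑ n ∈ Finset.range N, χ n ω = (σ' ω : ℝ) - (σ ω : ℝ) := by
    intro ω
    rw [← tele (fun n => (n : ℝ)) ω]
    refine Finset.sum_congr rfl fun n _ => ?_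
    push_cast
    ring
  -- stopped-value measurability
  have hFadapted : ∀ c : ℝ, Adapted 𝒢 (fun m ω => Real.exp (-c * X m ω)) := fun c m =>
    (hgm c).comp (hadapt m)
  have hFprog : ∀ c : ℝ, ProgMeasurable 𝒢 (fun m ω => Real.exp (-c * X m ω)) := fun c =>
    (hFadapted c).stronglyAdapted.progMeasurable_of_discrete
  have hφsm : ∀ n, StronglyMeasurable[𝒢 n] fun ω => Real.exp (-lam * X (min (σ ω) n) ω) :=
    fun n => by
      have h := stronglyMeasurable_stoppedValue_of_le (hFprog lam) (hσ.min_const n)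
        fun ω => min_le_right _ _
      convert h using 1
      funext ω
      simp only [stoppedValue]
      rcases le_total (σ ω) n with h | h
      · simp [h, WithTop.untopA]; left; rfl
      · simp [h, WithTop.untopA]; left; rfl
  have hσ'leN : ∀ ω, σ' ω ≤ N := hbdd
  have hσleN : ∀ ω, σ ω ≤ N := fun ω => (hle ω).trans (hbdd ω)
  have hstopm : ∀ (c : ℝ) (τ : Ω → ℕ), IsStoppingTime 𝒢 (fun ω => (τ ω : WithTop ℕ)) → (∀ ω, τ ω ≤ N) →
      Measurable fun ω => Real.exp (-c * X (τ ω) ω) := by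
    intro c τ hτ hτN
    have h := ((stronglyMeasurable_stoppedValue_of_le (hFprog c) hτ
      (fun ω => WithTop.coe_le_coe.2 (hτN ω))).mono (𝒢.le N)).measurable
    convert h using 1
    funext ω
    rfl
  -- the two per-step bounds
  have hterm1 : ∀ n, |∫ ω, χ n ω * (Real.exp (-(2 * lam) * X (n + 1) ω)
      - Real.exp (-(2 * lam) * X n ω)) ∂μ| ≤ C / γ * ∫ ω, χ n ω ∂μ := by
    intro n
    have h := core (2 * lam) (by positivity) (fun x hx => (hC x hx).2) n (fun _ => 1)
      stronglyMeasurable_const (fun ω => by norm_num)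
    simpa [mul_one] using h
  have hterm2 : ∀ n, |∫ ω, χ n ω * Real.exp (-lam * X (min (σ ω) n) ω)
      * (Real.exp (-lam * X (n + 1) ω) - Real.exp (-lam * X n ω)) ∂μ|
      ≤ C / γ * ∫ ω, χ n ω ∂μ := by
    intro n
    refine core lam hlam (fun x hx => (hC x hx).1) n _ (hφsm n) fun ω => ?_
    rw [abs_of_pos (Real.exp_pos _)]
    exact hgle lam hlam _ ω
  -- integrability of the summands
  have hint1 : ∀ n, Integrable (fun ω => χ n ω * (Real.exp (-(2 * lam) * X (n + 1) ω)
      - Real.exp (-(2 * lam) * X n ω))) μ := by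
    intro n
    refine hIb _ 2 ((hχm0 n).mul ((((hgm (2 * lam)).comp (hXm (n + 1)))).sub
      ((hgm (2 * lam)).comp (hXm n)))) (fun ω => ?_)
    rw [abs_mul]
    have hd : |Real.exp (-(2 * lam) * X (n + 1) ω) - Real.exp (-(2 * lam) * X n ω)| ≤ 2 := by
      have h1 := hgle (2 * lam) (by positivity) (n + 1) ω
      have h2 := hgle (2 * lam) (by positivity) n ω
      have h3 := (Real.exp_pos (-(2 * lam) * X (n + 1) ω)).le
      have h4 := (Real.exp_pos (-(2 * lam) * X n ω)).le
      rw [abs_le]; constructor <;> linarith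
    calc |χ n ω| * |Real.exp (-(2 * lam) * X (n + 1) ω) - Real.exp (-(2 * lam) * X n ω)|
        ≤ 1 * 2 := mul_le_mul (hχabs n ω) hd (abs_nonneg _) zero_le_one
      _ = 2 := one_mul _
  have hint2 : ∀ n, Integrable (fun ω => χ n ω * Real.exp (-lam * X (min (σ ω) n) ω)
      * (Real.exp (-lam * X (n + 1) ω) - Real.exp (-lam * X n ω))) μ := by
    intro n
    have hm : Measurable fun ω => Real.exp (-lam * X (min (σ ω) n) ω) :=
      ((hφsm n).mono (𝒢.le n)).measurable
    refine hIb _ 2 (((hχm0 n).mul hm).mul ((((hgm lam).comp (hXm (n + 1)))).sub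
      ((hgm lam).comp (hXm n)))) (fun ω => ?_)
    rw [abs_mul]
    have hd : |Real.exp (-lam * X (n + 1) ω) - Real.exp (-lam * X n ω)| ≤ 2 := by
      have h1 := hgle lam hlam (n + 1) ω
      have h2 := hgle lam hlam n ω
      have h3 := (Real.exp_pos (-lam * X (n + 1) ω)).le
      have h4 := (Real.exp_pos (-lam * X n ω)).le
      rw [abs_le]; constructor <;> linarith
    have hp : |χ n ω * Real.exp (-lam * X (min (σ ω) n) ω)| ≤ 1 := by
      rw [abs_mul]
      refine mul_le_one₀ (hχabs n ω) (abs_nonneg _) ?_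
      rw [abs_of_pos (Real.exp_pos _)]
      exact hgle lam hlam _ ω
    calc |χ n ω * Real.exp (-lam * X (min (σ ω) n) ω)|
          * |Real.exp (-lam * X (n + 1) ω) - Real.exp (-lam * X n ω)|
        ≤ 1 * 2 := mul_le_mul hp hd (abs_nonneg _) zero_le_one
      _ = 2 := one_mul _
  have hχint : ∀ n, Integrable (χ n) μ := fun n => hIb _ 1 (hχm0 n) (hχabs n)
  -- total mass identity
  have hsumχ : ∑ n ∈ Finset.range N, ∫ ω, χ n ω ∂μ = ∫ ω, ((σ' ω : ℝ) - (σ ω : ℝ)) ∂μ := by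
    rw [← integral_finset_sum _ fun n _ => hχint n]
    exact integral_congr_ae (ae_of_all _ fun ω => count ω)
  set E : ℝ := ∫ ω, ((σ' ω : ℝ) - (σ ω : ℝ)) ∂μ with hE
  -- bound for I₁
  have hI1 : |∫ ω, (Real.exp (-(2 * lam) * X (σ' ω) ω)
      - Real.exp (-(2 * lam) * X (σ ω) ω)) ∂μ| ≤ C / γ * E := by
    have hrep : ∫ ω, (Real.exp (-(2 * lam) * X (σ' ω) ω)
        - Real.exp (-(2 * lam) * X (σ ω) ω)) ∂μ
        = ∑ n ∈ Finset.range N, ∫ ω, χ n ω * (Real.exp (-(2 * lam) * X (n + 1) ω)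
            - Real.exp (-(2 * lam) * X n ω)) ∂μ := by
      rw [← integral_finset_sum _ fun n _ => hint1 n]
      refine integral_congr_ae (ae_of_all _ fun ω => ?_)
      exact (tele (fun m => Real.exp (-(2 * lam) * X m ω)) ω).symm
    rw [hrep]
    calc |∑ n ∈ Finset.range N, ∫ ω, χ n ω * (Real.exp (-(2 * lam) * X (n + 1) ω)
            - Real.exp (-(2 * lam) * X n ω)) ∂μ|
        ≤ ∑ n ∈ Finset.range N, |∫ ω, χ n ω * (Real.exp (-(2 * lam) * X (n + 1) ω)
            - Real.exp (-(2 * lam) * X n ω)) ∂μ| := Finset.abs_sum_le_sum_abs _ _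
      _ ≤ ∑ n ∈ Finset.range N, C / γ * ∫ ω, χ n ω ∂μ :=
          Finset.sum_le_sum fun n _ => hterm1 n
      _ = C / γ * ∑ n ∈ Finset.range N, ∫ ω, χ n ω ∂μ := by rw [Finset.mul_sum]
      _ = C / γ * E := by rw [hsumχ]
  -- bound for I₂
  have hI2 : |∫ ω, Real.exp (-lam * X (σ ω) ω) * (Real.exp (-lam * X (σ' ω) ω)
      - Real.exp (-lam * X (σ ω) ω)) ∂μ| ≤ C / γ * E := by
    have hrep : ∫ ω, Real.exp (-lam * X (σ ω) ω) * (Real.exp (-lam * X (σ' ω) ω)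
        - Real.exp (-lam * X (σ ω) ω)) ∂μ
        = ∑ n ∈ Finset.range N, ∫ ω, χ n ω * Real.exp (-lam * X (min (σ ω) n) ω)
            * (Real.exp (-lam * X (n + 1) ω) - Real.exp (-lam * X n ω)) ∂μ := by
      rw [← integral_finset_sum _ fun n _ => hint2 n]
      have hpt : ∀ ω, Real.exp (-lam * X (σ ω) ω) * (Real.exp (-lam * X (σ' ω) ω)
          - Real.exp (-lam * X (σ ω) ω))
          = ∑ n ∈ Finset.range N, χ n ω * Real.exp (-lam * X (min (σ ω) n) ω)
              * (Real.exp (-lam * X (n + 1) ω) - Real.exp (-lam * X n ω)) := by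
        intro ω
        have ht : Real.exp (-lam * X (σ' ω) ω) - Real.exp (-lam * X (σ ω) ω)
          = ∑ n ∈ Finset.range N, χ n ω
              * (Real.exp (-lam * X (n + 1) ω) - Real.exp (-lam * X n ω)) :=
        (tele (fun m => Real.exp (-lam * X m ω)) ω).symm
        rw [ht, Finset.mul_sum]
        refine Finset.sum_congr rfl fun n _ => ?_
        rw [hχ01]
        by_cases h : σ ω ≤ n ∧ n < σ' ω
        · rw [if_pos h, min_eq_left h.1]; ring
        · rw [if_neg h]; ring
      exact integral_congr_ae (ae_of_all _ hpt)
    rw [hrep]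
    calc |∑ n ∈ Finset.range N, ∫ ω, χ n ω * Real.exp (-lam * X (min (σ ω) n) ω)
            * (Real.exp (-lam * X (n + 1) ω) - Real.exp (-lam * X n ω)) ∂μ|
        ≤ ∑ n ∈ Finset.range N, |∫ ω, χ n ω * Real.exp (-lam * X (min (σ ω) n) ω)
            * (Real.exp (-lam * X (n + 1) ω) - Real.exp (-lam * X n ω)) ∂μ| :=
          Finset.abs_sum_le_sum_abs _ _
      _ ≤ ∑ n ∈ Finset.range N, C / γ * ∫ ω, χ n ω ∂μ :=
          Finset.sum_le_sum fun n _ => hterm2 n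
      _ = C / γ * ∑ n ∈ Finset.range N, ∫ ω, χ n ω ∂μ := by rw [Finset.mul_sum]
      _ = C / γ * E := by rw [hsumχ]
  -- integrability of the global integrands
  have hGint : Integrable (fun ω => Real.exp (-(2 * lam) * X (σ' ω) ω)
      - Real.exp (-(2 * lam) * X (σ ω) ω)) μ := by
    refine hIb _ 2 ((hstopm (2 * lam) σ' hσ' hσ'leN).sub (hstopm (2 * lam) σ hσ hσleN))
      (fun ω => ?_)
    have h1 := hgle (2 * lam) (by positivity) (σ' ω) ω
    have h2 := hgle (2 * lam) (by positivity) (σ ω) ω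
    have h3 := (Real.exp_pos (-(2 * lam) * X (σ' ω) ω)).le
    have h4 := (Real.exp_pos (-(2 * lam) * X (σ ω) ω)).le
    rw [abs_le]; constructor <;> linarith
  have hF2int : Integrable (fun ω => Real.exp (-lam * X (σ ω) ω)
      * (Real.exp (-lam * X (σ' ω) ω) - Real.exp (-lam * X (σ ω) ω))) μ := by
    refine hIb _ 2 ((hstopm lam σ hσ hσleN).mul
      ((hstopm lam σ' hσ' hσ'leN).sub (hstopm lam σ hσ hσleN))) (fun ω => ?_)
    have h1 := hgle lam hlam (σ' ω) ω
    have h2 := hgle lam hlam (σ ω) ω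
    have h3 := (Real.exp_pos (-lam * X (σ' ω) ω)).le
    have h4 := (Real.exp_pos (-lam * X (σ ω) ω)).le
    rw [abs_mul, abs_of_nonneg h4]
    have hd : |Real.exp (-lam * X (σ' ω) ω) - Real.exp (-lam * X (σ ω) ω)| ≤ 2 := by
      rw [abs_le]; constructor <;> linarith
    calc Real.exp (-lam * X (σ ω) ω)
          * |Real.exp (-lam * X (σ' ω) ω) - Real.exp (-lam * X (σ ω) ω)|
        ≤ 1 * 2 := mul_le_mul h2 hd (abs_nonneg _) zero_le_one
      _ = 2 := one_mul _
  -- main decomposition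
  have hsq : ∀ x : ℝ, Real.exp (-lam * x) ^ 2 = Real.exp (-(2 * lam) * x) := by
    intro x
    rw [sq, ← Real.exp_add]
    ring_nf
  have hmain : ∫ ω, (Real.exp (-lam * X (σ' ω) ω) - Real.exp (-lam * X (σ ω) ω)) ^ 2 ∂μ
      = (∫ ω, (Real.exp (-(2 * lam) * X (σ' ω) ω) - Real.exp (-(2 * lam) * X (σ ω) ω)) ∂μ)
        - 2 * ∫ ω, Real.exp (-lam * X (σ ω) ω) * (Real.exp (-lam * X (σ' ω) ω)
            - Real.exp (-lam * X (σ ω) ω)) ∂μ := by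
    have hpt : ∀ ω, (Real.exp (-lam * X (σ' ω) ω) - Real.exp (-lam * X (σ ω) ω)) ^ 2
        = (Real.exp (-(2 * lam) * X (σ' ω) ω) - Real.exp (-(2 * lam) * X (σ ω) ω))
          - 2 * (Real.exp (-lam * X (σ ω) ω) * (Real.exp (-lam * X (σ' ω) ω)
            - Real.exp (-lam * X (σ ω) ω))) := by
      intro ω
      linear_combination hsq (X (σ' ω) ω) - hsq (X (σ ω) ω)
    rw [integral_congr_ae (ae_of_all _ hpt), integral_sub hGint (hF2int.const_mul 2),
      integral_const_mul]
  rw [hmain]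
  have hfin : (3 : ℝ) * (C / γ) * E = C / γ * E + 2 * (C / γ * E) := by ring
  rw [hfin]
  have hb1 := (abs_le.1 hI1).2
  have hb2 := (neg_le_of_abs_le hI2)
  linarith
end
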